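/- arXiv:2605.10037 — 9 statements merged into one kernel-verified Lean document; each statement's English description precedes it below -/
import Mathlib

section
/- Let A be an n×n complex matrix and let α, β be real numbers. If for every eigenvalue μ of A (i.e., every μ in the spectrum of A over ℂ) one has μ·sinh(μ) + (α + βμ)·cosh(μ) ≠ 0, then the matrix A·sinh(A) + (α·I + β·A)·cosh(A) is invertible. -/
open scoped Matrix

open NormedSpace

lemma exp_mulVec_eigen {n : ℕ} (A : Matrix (Fin n) (Fin n) ℂ) {v : Fin n → ℂ} {μ : ℂ}
    (hv : A.mulVec v = μ • v) :
    (exp A).mulVec v = Complex.exp μ • v := by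
  letI : SeminormedRing (Matrix (Fin n) (Fin n) ℂ) := Matrix.linftyOpSemiNormedRing
  letI : NormedRing (Matrix (Fin n) (Fin n) ℂ) := Matrix.linftyOpNormedRing
  letI : NormedAlgebra ℂ (Matrix (Fin n) (Fin n) ℂ) := Matrix.linftyOpNormedAlgebra
  have hpow : ∀ k : ℕ, (A ^ k).mulVec v = μ ^ k • v := by
    intro k
    induction k with
    | zero => simp [Matrix.one_mulVec]
    | succ k ih =>
        rw [pow_succ, ← Matrix.mulVec_mulVec, hv, Matrix.mulVec_smul, ih,
          smul_smul, ← pow_succ']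
  let L : Matrix (Fin n) (Fin n) ℂ →ₗ[ℂ] (Fin n → ℂ) :=
    { toFun := fun M => M.mulVec v
      map_add' := fun M N => Matrix.add_mulVec M N v
      map_smul' := fun c M => Matrix.smul_mulVec c M v }
  have hL : Continuous L := L.continuous_of_finiteDimensional
  have hsum : HasSum (fun k : ℕ => (k.factorial : ℂ)⁻¹ • A ^ k) (exp A) := exp_series_hasSum_exp' A
  have h1 : HasSum (fun k : ℕ => L ((k.factorial : ℂ)⁻¹ • A ^ k)) (L (exp A)) :=
    hsum.map L.toAddMonoidHom hL
  have h2 : HasSum (fun k : ℕ => ((k.factorial : ℂ)⁻¹ * μ ^ k) • v) (Complex.exp μ • v) := by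
    have := (exp_series_hasSum_exp' (𝕂 := ℂ) μ).smul_const v
    simpa [Complex.exp_eq_exp_ℂ, smul_eq_mul] using this
  have h3 : (fun k : ℕ => L ((k.factorial : ℂ)⁻¹ • A ^ k)) = fun k : ℕ => ((k.factorial : ℂ)⁻¹ * μ ^ k) • v := by
    funext k
    simp only [map_smul, L, LinearMap.coe_mk, AddHom.coe_mk, hpow, smul_smul]
  rw [h3] at h1
  exact h1.unique h2

/-- Let `A` be an `n × n` complex matrix and `α, β ∈ ℝ`. If every
eigenvalue `μ` of `A` (every element of the spectrum of `A` over `ℂ`) satisfies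
`μ·sinh μ + (α + βμ)·cosh μ ≠ 0`, then
`A·sinh A + (α·I + β·A)·cosh A` is invertible, where
`sinh A = (exp A − exp (−A))/2` and `cosh A = (exp A + exp (−A))/2`. -/
theorem stmt_2 (n : ℕ) (A : Matrix (Fin n) (Fin n) ℂ) (α β : ℝ)
    (h : ∀ μ ∈ spectrum ℂ A,
      μ * Complex.sinh μ + ((α : ℂ) + (β : ℂ) * μ) * Complex.cosh μ ≠ 0) :
    IsUnit (A * ((2 : ℂ)⁻¹ • (NormedSpace.exp A - NormedSpace.exp (-A))) +
      ((α : ℂ) • (1 : Matrix (Fin n) (Fin n) ℂ) + (β : ℂ) • A) *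
        ((2 : ℂ)⁻¹ • (NormedSpace.exp A + NormedSpace.exp (-A)))) := by
  set E := NormedSpace.exp A with hE
  set F := NormedSpace.exp (-A) with hF
  set B := A * ((2 : ℂ)⁻¹ • (E - F)) +
      ((α : ℂ) • (1 : Matrix (Fin n) (Fin n) ℂ) + (β : ℂ) • A) * ((2 : ℂ)⁻¹ • (E + F)) with hBdef
  by_contra hB
  -- B has nontrivial kernel
  have hdet : B.det = 0 := by
    by_contra hd
    exact hB ((Matrix.isUnit_iff_isUnit_det B).mpr (isUnit_iff_ne_zero.mpr hd))
  obtain ⟨v, hv0, hBv⟩ := Matrix.exists_mulVec_eq_zero_iff.mpr hdet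
  -- A commutes with B
  have hAE : Commute A E := by
    letI : SeminormedRing (Matrix (Fin n) (Fin n) ℂ) := Matrix.linftyOpSemiNormedRing
    letI : NormedRing (Matrix (Fin n) (Fin n) ℂ) := Matrix.linftyOpNormedRing
    letI : NormedAlgebra ℂ (Matrix (Fin n) (Fin n) ℂ) := Matrix.linftyOpNormedAlgebra
    exact (Commute.refl A).exp_right
  have hAF : Commute A F := by
    letI : SeminormedRing (Matrix (Fin n) (Fin n) ℂ) := Matrix.linftyOpSemiNormedRing
    letI : NormedRing (Matrix (Fin n) (Fin n) ℂ) := Matrix.linftyOpNormedRing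
    letI : NormedAlgebra ℂ (Matrix (Fin n) (Fin n) ℂ) := Matrix.linftyOpNormedAlgebra
    exact (Commute.neg_right (Commute.refl A)).exp_right
  have hcommu : Commute A B := by
    refine Commute.add_right ?_ ?_
    · exact (Commute.refl A).mul_right ((hAE.sub_right hAF).smul_right _)
    · exact (((Commute.one_right A).smul_right _).add_right
        ((Commute.refl A).smul_right _)).mul_right ((hAE.add_right hAF).smul_right _)
  have hcomm : A * B = B * A := hcommu.eq
  -- kernel of B is A-invariant
  let K : Submodule ℂ (Fin n → ℂ) := LinearMap.ker B.mulVecLin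
  have hinv : ∀ x ∈ K, A.mulVec x ∈ K := by
    intro x hx
    have hx' : B.mulVec x = 0 := hx
    show B.mulVec (A.mulVec x) = 0
    rw [Matrix.mulVec_mulVec, ← hcomm, ← Matrix.mulVec_mulVec, hx', Matrix.mulVec_zero]
  let f : K →ₗ[ℂ] K := LinearMap.restrict A.mulVecLin hinv
  haveI : Nontrivial K := by
    refine Submodule.nontrivial_iff_ne_bot.mpr ?_
    intro hbot
    exact hv0 ((Submodule.eq_bot_iff K).mp hbot v hBv)
  obtain ⟨μ, hμeig⟩ := Module.End.exists_eigenvalue f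
  obtain ⟨w, hw⟩ := hμeig.exists_hasEigenvector
  have hfw : f w = μ • w := hw.apply_eq_smul
  set u : Fin n → ℂ := (w : Fin n → ℂ) with hu
  have huK : u ∈ K := w.2
  have hu0 : u ≠ 0 := fun h0 => hw.2 (Subtype.ext h0)
  have hAu : A.mulVec u = μ • u := by
    exact congrArg Subtype.val hfw
  -- μ is in the spectrum of A
  have hμspec : μ ∈ spectrum ℂ A := by
    rw [spectrum.mem_iff]
    intro hunit
    rw [Matrix.isUnit_iff_isUnit_det] at hunit
    have hdet0 : (algebraMap ℂ (Matrix (Fin n) (Fin n) ℂ) μ - A).det = 0 := by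
      rw [← Matrix.exists_mulVec_eq_zero_iff]
      refine ⟨u, hu0, ?_⟩
      rw [Matrix.sub_mulVec, hAu, Algebra.algebraMap_eq_smul_one, Matrix.smul_mulVec,
        Matrix.one_mulVec, sub_self]
    rw [hdet0] at hunit
    exact (isUnit_iff_ne_zero.mp hunit) rfl
  -- compute B.mulVec u
  have hEu : E.mulVec u = Complex.exp μ • u := exp_mulVec_eigen A hAu
  have hFu : F.mulVec u = Complex.exp (-μ) • u := by
    refine exp_mulVec_eigen (-A) ?_
    rw [Matrix.neg_mulVec, hAu, ← neg_smul]
  have hBu : B.mulVec u =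
      ((2 : ℂ)⁻¹ * (μ * (Complex.exp μ - Complex.exp (-μ))
        + ((α : ℂ) + (β : ℂ) * μ) * (Complex.exp μ + Complex.exp (-μ)))) • u := by
    rw [hBdef, Matrix.add_mulVec, ← Matrix.mulVec_mulVec, ← Matrix.mulVec_mulVec,
      Matrix.smul_mulVec, Matrix.smul_mulVec, Matrix.sub_mulVec, Matrix.add_mulVec,
      hEu, hFu, Matrix.add_mulVec, Matrix.smul_mulVec, Matrix.smul_mulVec,
      Matrix.one_mulVec]
    simp only [hEu, hFu, Matrix.mulVec_smul, hAu, smul_smul, smul_add, ← add_smul, ← sub_smul]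
    congr 1
    ring
  have hBu0 : B.mulVec u = 0 := huK
  rw [hBu] at hBu0
  rcases smul_eq_zero.mp hBu0 with hc | hc
  · apply h μ hμspec
    simp only [Complex.sinh, Complex.cosh]
    field_simp at hc ⊢
    linear_combination hc
  · exact hu0 hc
end

section
/- Let α, β be real numbers with α > 0 and β > 0, and let λ ∈ ℂ. There exists a twice continuously differentiable function f : ℝ → ℂ, not identically zero on [0,1], satisfying f''(x) = λ² f(x) for all x ∈ ℝ, f'(0) = 0, and f'(1) = −(α + βλ) f(1), if and only if λ·sinh(λ) + (α + βλ)·cosh(λ) = 0. -/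
/-- Let `α, β > 0` be real and `λ ∈ ℂ`. There exists a twice continuously
differentiable `f : ℝ → ℂ`, not identically zero on `[0,1]`, with `f'' = λ² f` on `ℝ`,
`f'(0) = 0`, and `f'(1) = −(α + βλ) f(1)`, if and only if
`λ·sinh λ + (α + βλ)·cosh λ = 0`. -/
theorem stmt_3 (α β : ℝ) (hα : 0 < α) (hβ : 0 < β) (lam : ℂ) :
    (∃ f : ℝ → ℂ, ContDiff ℝ 2 f ∧
        (¬ ∀ x ∈ Set.Icc (0 : ℝ) 1, f x = 0) ∧
        (∀ x : ℝ, deriv (deriv f) x = lam ^ 2 * f x) ∧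
        deriv f 0 = 0 ∧
        deriv f 1 = -((α : ℂ) + (β : ℂ) * lam) * f 1) ↔
      lam * Complex.sinh lam + ((α : ℂ) + (β : ℂ) * lam) * Complex.cosh lam = 0 := by
  have hlin : ∀ x : ℝ, HasDerivAt (fun x : ℝ => lam * (x : ℂ)) lam x := fun x => by
    simpa using (Complex.ofRealCLM.hasDerivAt.const_mul lam)
  have hC : ∀ x : ℝ, HasDerivAt (fun x : ℝ => Complex.cosh (lam * x))
      (lam * Complex.sinh (lam * x)) x := fun x => by
    exact ((Complex.hasDerivAt_cosh (lam * x)).comp x (hlin x)).congr_deriv (mul_comm _ _)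
  have hS : ∀ x : ℝ, HasDerivAt (fun x : ℝ => Complex.sinh (lam * x))
      (lam * Complex.cosh (lam * x)) x := fun x => by
    exact ((Complex.hasDerivAt_sinh (lam * x)).comp x (hlin x)).congr_deriv (mul_comm _ _)
  constructor
  · rintro ⟨f, hf, hnz, hf'', hd0, hd1⟩
    have hfd : Differentiable ℝ f := hf.differentiable (by norm_num)
    have hfd' : Differentiable ℝ (deriv f) := by
      have h2 : ContDiff ℝ ((1 : WithTop ℕ∞) + 1) f := by norm_num; exact hf
      rw [contDiff_succ_iff_deriv] at h2
      exact h2.2.2.differentiable one_ne_zero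
    have hf'x : ∀ x : ℝ, HasDerivAt f (deriv f x) x := fun x => (hfd x).hasDerivAt
    have hf''x : ∀ x : ℝ, HasDerivAt (deriv f) (lam ^ 2 * f x) x := fun x => by
      have := (hfd' x).hasDerivAt
      rwa [hf'' x] at this
    -- Wronskian with cosh
    have hW1 : ∀ x : ℝ,
        deriv f x * Complex.cosh (lam * x) - f x * (lam * Complex.sinh (lam * x)) = 0 := by
      have hD : ∀ y : ℝ, HasDerivAt
          (fun y : ℝ => deriv f y * Complex.cosh (lam * y)
            - f y * (lam * Complex.sinh (lam * y))) 0 y := by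
        intro y
        have h := ((hf''x y).mul (hC y)).sub ((hf'x y).mul ((hS y).const_mul lam))
        exact h.congr_deriv (by ring)
      intro x
      have hc := is_const_of_deriv_eq_zero (fun y => (hD y).differentiableAt)
        (fun y => (hD y).deriv) x 0
      simp only [hd0] at hc
      simpa using hc
    -- Wronskian with sinh (v2)
    have hW2 : ∀ x : ℝ,
        deriv f x * Complex.sinh (lam * x) - f x * (lam * Complex.cosh (lam * x))
          = -(lam * f 0) := by
      have hD : ∀ y : ℝ, HasDerivAt
          (fun y : ℝ => deriv f y * Complex.sinh (lam * y)
            - f y * (lam * Complex.cosh (lam * y))) 0 y := by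
        intro y
        have h := ((hf''x y).mul (hS y)).sub ((hf'x y).mul ((hC y).const_mul lam))
        exact h.congr_deriv (by ring)
      intro x
      have hc := is_const_of_deriv_eq_zero (fun y => (hD y).differentiableAt)
        (fun y => (hD y).deriv) x 0
      simp only [Complex.ofReal_zero, mul_zero, Complex.sinh_zero, Complex.cosh_zero,
        hd0, zero_mul, mul_one, zero_sub] at hc
      linear_combination hc
    have eqf : ∀ x : ℝ, lam * f x = lam * f 0 * Complex.cosh (lam * x) := by
      intro x
      linear_combination Complex.sinh (lam * x) * hW1 x - Complex.cosh (lam * x) * hW2 x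
        - lam * f x * Complex.cosh_sq_sub_sinh_sq (lam * x)
    have eqf' : ∀ x : ℝ, deriv f x = lam * f 0 * Complex.sinh (lam * x) := by
      intro x
      linear_combination Complex.cosh (lam * x) * hW1 x - Complex.sinh (lam * x) * hW2 x
        - deriv f x * Complex.cosh_sq_sub_sinh_sq (lam * x)
    by_cases hl : lam = 0
    · -- λ = 0 : f is constant, boundary condition forces f ≡ 0, contradiction
      exfalso
      have hder0 : ∀ x : ℝ, deriv f x = 0 := fun x => by simp [eqf' x, hl]
      have hconst : ∀ x : ℝ, f x = f 0 := fun x => is_const_of_deriv_eq_zero hfd hder0 x 0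
      have h1 : deriv f 1 = -((α : ℂ) + (β : ℂ) * lam) * f 1 := hd1
      rw [hder0 1, hconst 1, hl] at h1
      have hαne : ((α : ℂ)) ≠ 0 := by
        exact_mod_cast ne_of_gt hα
      have hf0 : f 0 = 0 := by
        have h2 : (α : ℂ) * f 0 = 0 := by linear_combination h1
        exact (mul_eq_zero.mp h2).resolve_left hαne
      exact hnz fun x _ => by rw [hconst x, hf0]
    · have hf0 : f 0 ≠ 0 := by
        intro h0
        refine hnz fun x _ => ?_
        have := eqf x
        rw [h0] at this
        simpa [hl] using this
      have e1 : f 1 = f 0 * Complex.cosh lam := by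
        have := eqf 1
        rw [mul_assoc] at this
        have h := mul_left_cancel₀ hl this
        simpa using h
      have e2 : deriv f 1 = lam * f 0 * Complex.sinh lam := by
        simpa using eqf' 1
      rw [e1, e2] at hd1
      have key : f 0 * (lam * Complex.sinh lam
          + ((α : ℂ) + (β : ℂ) * lam) * Complex.cosh lam) = 0 := by
        linear_combination hd1
      rcases mul_eq_zero.mp key with h | h
      · exact absurd h hf0
      · exact h
  · intro h
    refine ⟨fun x => Complex.cosh (lam * x), ?_, ?_, ?_, ?_, ?_⟩
    · exact (Complex.contDiff_cosh.restrict_scalars ℝ).comp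
        (contDiff_const.mul Complex.ofRealCLM.contDiff)
    · intro hall
      have := hall 0 ⟨le_refl _, zero_le_one⟩
      simp at this
    · intro x
      have hderiv : deriv (fun x : ℝ => Complex.cosh (lam * x))
          = fun x : ℝ => lam * Complex.sinh (lam * x) := funext fun x => (hC x).deriv
      rw [hderiv, ((hS x).const_mul lam).deriv]
      ring
    · have := (hC 0).deriv
      simpa using this
    · have h1 := (hC 1).deriv
      rw [h1]
      push_cast
      rw [mul_one]
      linear_combination h
end

section
/- Let A be an n×n complex matrix, α, β ∈ ℝ, and B₁, B₂, B₃, B₄ ∈ ℂⁿ. Assume the matrix M := A·sinh(A) + (α·I + β·A)·cosh(A) is invertible. Define Q := M⁻¹·(A B₄ + B₃ + (cosh(A) + (α·I + β·A)·𝒢(A))·(A B₂ + B₁)), and define L₂ : ℝ → ℂⁿ by L₂(x) = −S(x)·(A B₂ + B₁) + cosh(xA)·Q, where S(x) = ∑_{k=0}^∞ (x^{2k+1}/(2k+1)!)·A^{2k}. Set L₁(x) := −sinh(xA)·(A B₂ + B₁) + A·cosh(xA)·Q, L₃ := −B₂, and L₄ := −β·𝒢(A)·(A B₂ + B₁) +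 β·cosh(A)·Q − B₄. Then for all x ∈ ℝ: L₂''(x) = A²·L₂(x) and L₁(x) = A·L₂(x); and furthermore B₁ − A·L₃ + L₂'(0) = 0, B₂ + L₃ = 0, B₃ − A·L₄ − L₂'(1) − α·L₂(1) = 0, and B₄ + L₄ − β·L₂(1) = 0. -/
set_option maxHeartbeats 1000000
set_option synthInstance.maxHeartbeats 200000

open scoped Matrix

attribute [local instance] Matrix.linftyOpNormedRing Matrix.linftyOpNormedAlgebra

private lemma stmt7_norm_pow_le {n : ℕ} (A : Matrix (Fin n) (Fin n) ℂ) (m : ℕ) :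
    ‖A ^ m‖ ≤ max 1 ‖(1 : Matrix (Fin n) (Fin n) ℂ)‖ * (max ‖A‖ 1) ^ m := by
  induction m with
  | zero =>
      simp only [pow_zero, mul_one]
      exact le_max_right 1 ‖(1 : Matrix (Fin n) (Fin n) ℂ)‖
  | succ m ih =>
      have h1 : (0:ℝ) ≤ max 1 ‖(1 : Matrix (Fin n) (Fin n) ℂ)‖ :=
        le_trans zero_le_one (le_max_left _ _)
      calc ‖A ^ (m+1)‖ = ‖A * A ^ m‖ := by rw [pow_succ']
      _ ≤ ‖A‖ * ‖A ^ m‖ := norm_mul_le _ _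
      _ ≤ (max ‖A‖ 1) * (max 1 ‖(1 : Matrix (Fin n) (Fin n) ℂ)‖ * (max ‖A‖ 1) ^ m) := by
          apply mul_le_mul (le_max_left _ _) ih (norm_nonneg _)
            (le_trans zero_le_one (le_max_right _ _))
      _ = max 1 ‖(1 : Matrix (Fin n) (Fin n) ℂ)‖ * (max ‖A‖ 1) ^ (m+1) := by ring

private lemma stmt7_summable {n : ℕ} (A : Matrix (Fin n) (Fin n) ℂ) (c : ℕ → ℂ)
    (e m : ℕ → ℕ) (s : ℝ) (hs : 1 ≤ s) (hinj : Function.Injective m)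
    (hem : ∀ k, e k ≤ m k)
    (hc : ∀ k, ‖c k‖ ≤ s ^ m k / (Nat.factorial (m k) : ℝ)) :
    Summable fun k => c k • A ^ e k := by
  set C := max 1 ‖(1 : Matrix (Fin n) (Fin n) ℂ)‖ with hCdef
  set r := max ‖A‖ 1 with hrdef
  have hr1 : (1:ℝ) ≤ r := le_max_right _ _
  have hC0 : (0:ℝ) ≤ C := le_trans zero_le_one (le_max_left _ _)
  have hs0 : (0:ℝ) ≤ s := zero_le_one.trans hs
  have hu : Summable fun k : ℕ => C * ((s*r) ^ m k / (Nat.factorial (m k) : ℝ)) := by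
    have h := (Real.summable_pow_div_factorial (s*r)).comp_injective hinj
    exact (h.mul_left C)
  refine Summable.of_norm_bounded hu fun k => ?_
  rw [norm_smul]
  calc ‖c k‖ * ‖A ^ e k‖ ≤ (s ^ m k / (Nat.factorial (m k) : ℝ)) * (C * r ^ m k) := by
        refine mul_le_mul (hc k) ?_ (norm_nonneg _) (by positivity)
        refine (stmt7_norm_pow_le A (e k)).trans ?_
        exact mul_le_mul_of_nonneg_left (pow_le_pow_right₀ hr1 (hem k)) hC0
  _ = C * ((s*r) ^ m k / (Nat.factorial (m k) : ℝ)) := by rw [mul_pow]; ring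

/-- With `sinh(xA) = (exp(xA) − exp(−xA))/2`,
`cosh(xA) = (exp(xA) + exp(−xA))/2`, `𝒢(A) = ∑ₖ A^(2k)/(2k+1)!`, and
`S(x) = ∑ₖ (x^(2k+1)/(2k+1)!) A^(2k)`: if `M = A sinh A + (αI + βA) cosh A` is
invertible, `Q = M⁻¹(AB₄ + B₃ + (cosh A + (αI + βA)𝒢(A))(AB₂ + B₁))`,
`L₂(x) = −S(x)(AB₂+B₁) + cosh(xA)Q`, `L₁(x) = −sinh(xA)(AB₂+B₁) + A cosh(xA) Q`,
`L₃ = −B₂`, `L₄ = −β𝒢(A)(AB₂+B₁) + β cosh(A) Q − B₄`, then `L₂'' = A²L₂`,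
`L₁ = A L₂`, `B₁ − AL₃ + L₂'(0) = 0`, `B₂ + L₃ = 0`,
`B₃ − AL₄ − L₂'(1) − αL₂(1) = 0`, and `B₄ + L₄ − βL₂(1) = 0`. -/
theorem stmt_7 (n : ℕ) (A : Matrix (Fin n) (Fin n) ℂ) (α β : ℝ)
    (B₁ B₂ B₃ B₄ : Fin n → ℂ)
    (sinhxA coshxA S : ℝ → Matrix (Fin n) (Fin n) ℂ) (GA M : Matrix (Fin n) (Fin n) ℂ)
    (hsinh : ∀ x : ℝ,
      sinhxA x = (2 : ℂ)⁻¹ • (NormedSpace.exp ((x : ℂ) • A) - NormedSpace.exp (-((x : ℂ) • A))))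
    (hcosh : ∀ x : ℝ,
      coshxA x = (2 : ℂ)⁻¹ • (NormedSpace.exp ((x : ℂ) • A) + NormedSpace.exp (-((x : ℂ) • A))))
    (hS : ∀ x : ℝ, S x =
      ∑' k : ℕ, (((x : ℂ) ^ (2 * k + 1) / (Nat.factorial (2 * k + 1) : ℂ)) • A ^ (2 * k)))
    (hGA : GA = ∑' k : ℕ, ((Nat.factorial (2 * k + 1) : ℂ))⁻¹ • A ^ (2 * k))
    (hM : M = A * sinhxA 1 + ((α : ℂ) • (1 : Matrix (Fin n) (Fin n) ℂ) + (β : ℂ) • A) * coshxA 1)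
    (hMunit : IsUnit M)
    (Q : Fin n → ℂ)
    (hQ : Q = M⁻¹ *ᵥ (A *ᵥ B₄ + B₃ +
      (coshxA 1 + ((α : ℂ) • (1 : Matrix (Fin n) (Fin n) ℂ) + (β : ℂ) • A) * GA) *ᵥ
        (A *ᵥ B₂ + B₁)))
    (L₁ L₂ : ℝ → Fin n → ℂ) (L₃ L₄ : Fin n → ℂ)
    (hL₂ : ∀ x : ℝ, L₂ x = -(S x *ᵥ (A *ᵥ B₂ + B₁)) + coshxA x *ᵥ Q)
    (hL₁ : ∀ x : ℝ, L₁ x = -(sinhxA x *ᵥ (A *ᵥ B₂ + B₁)) + (A * coshxA x) *ᵥ Q)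
    (hL₃ : L₃ = -B₂)
    (hL₄ : L₄ = -((β : ℂ) • (GA *ᵥ (A *ᵥ B₂ + B₁))) + (β : ℂ) • (coshxA 1 *ᵥ Q) - B₄) :
    (∀ x : ℝ, deriv (deriv L₂) x = (A * A) *ᵥ L₂ x ∧ L₁ x = A *ᵥ L₂ x) ∧
    B₁ - A *ᵥ L₃ + deriv L₂ 0 = 0 ∧
    B₂ + L₃ = 0 ∧
    B₃ - A *ᵥ L₄ - deriv L₂ 1 - (α : ℂ) • L₂ 1 = 0 ∧
    B₄ + L₄ - (β : ℂ) • L₂ 1 = 0 := by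
  have inj2 : Function.Injective (fun k : ℕ => 2 * k) := fun a b h => by
    have h' : 2 * a = 2 * b := h
    omega
  have inj21 : Function.Injective (fun k : ℕ => 2 * k + 1) := fun a b h => by
    have h' : 2 * a + 1 = 2 * b + 1 := h
    omega
  have normc : ∀ (y : ℝ) (m : ℕ),
      ‖((y:ℂ) ^ m / (Nat.factorial m : ℂ))‖ = |y| ^ m / (Nat.factorial m : ℝ) := by
    intro y m
    rw [norm_div, norm_pow]
    simp [Complex.norm_real, Complex.norm_natCast, Real.norm_eq_abs]
  -- summability of the S-series
  have hSsum : ∀ x : ℝ, Summable fun k : ℕ =>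
      ((x:ℂ) ^ (2*k+1) / (Nat.factorial (2*k+1) : ℂ)) • A ^ (2*k) := by
    intro x
    refine stmt7_summable A _ (fun k => 2*k) (fun k => 2*k+1) (max |x| 1)
      (le_max_right _ _) inj21 (fun k => Nat.le_succ _) (fun k => ?_)
    rw [normc]
    gcongr
    exact le_max_left _ _
  -- even/odd decomposition of exp
  have hexp : ∀ x : ℝ, NormedSpace.exp ((x:ℂ) • A) =
      (∑' k:ℕ, ((x:ℂ)^(2*k) / (Nat.factorial (2*k) : ℂ)) • A^(2*k)) +
      ∑' k:ℕ, ((x:ℂ)^(2*k+1) / (Nat.factorial (2*k+1) : ℂ)) • A^(2*k+1) := by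
    intro x
    have h0 : ∀ m:ℕ, ((Nat.factorial m : ℂ))⁻¹ • ((x:ℂ) • A)^m
        = ((x:ℂ)^m / (Nat.factorial m : ℂ)) • A^m := by
      intro m; rw [smul_pow, smul_smul, div_eq_mul_inv, mul_comm]
    have hsummable : Summable fun m:ℕ => ((x:ℂ)^m / (Nat.factorial m : ℂ)) • A^m := by
      have := NormedSpace.expSeries_summable' (𝕂 := ℂ) ((x:ℂ) • A)
      simp only [h0] at this
      exact this
    rw [NormedSpace.exp_eq_tsum (𝕂 := ℂ)]
    simp only [h0]
    refine (tsum_even_add_odd ?_ ?_).symm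
    · have h' := hsummable.comp_injective inj2
      simp only [Function.comp_def] at h'
      exact h'
    · have h' := hsummable.comp_injective inj21
      simp only [Function.comp_def] at h'
      exact h'
  have hexpneg : ∀ x : ℝ, NormedSpace.exp (-((x:ℂ) • A)) =
      (∑' k:ℕ, ((x:ℂ)^(2*k) / (Nat.factorial (2*k) : ℂ)) • A^(2*k)) -
      ∑' k:ℕ, ((x:ℂ)^(2*k+1) / (Nat.factorial (2*k+1) : ℂ)) • A^(2*k+1) := by
    intro x
    have h2 := hexp (-x)
    have hneg : (((-x : ℝ)):ℂ) • A = -((x:ℂ) • A) := by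
      rw [Complex.ofReal_neg, neg_smul]
    rw [hneg] at h2
    rw [h2, Complex.ofReal_neg]
    have he : ∀ k:ℕ, ((-(x:ℂ))^(2*k) / (Nat.factorial (2*k) : ℂ)) • A^(2*k)
        = ((x:ℂ)^(2*k) / (Nat.factorial (2*k) : ℂ)) • A^(2*k) := fun k => by
      rw [Even.neg_pow (even_two_mul k)]
    have ho : ∀ k:ℕ, ((-(x:ℂ))^(2*k+1) / (Nat.factorial (2*k+1) : ℂ)) • A^(2*k+1)
        = -(((x:ℂ)^(2*k+1) / (Nat.factorial (2*k+1) : ℂ)) • A^(2*k+1)) := fun k => by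
      rw [Odd.neg_pow ⟨k, by ring⟩, neg_div, neg_smul]
    simp only [he, ho, tsum_neg]
    rw [sub_eq_add_neg]
  have hcoshE : ∀ x : ℝ, coshxA x =
      ∑' k:ℕ, ((x:ℂ)^(2*k) / (Nat.factorial (2*k) : ℂ)) • A^(2*k) := by
    intro x; rw [hcosh x, hexp x, hexpneg x]; module
  have hsinhO : ∀ x : ℝ, sinhxA x =
      ∑' k:ℕ, ((x:ℂ)^(2*k+1) / (Nat.factorial (2*k+1) : ℂ)) • A^(2*k+1) := by
    intro x; rw [hsinh x, hexp x, hexpneg x]; module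
  -- sinh(xA) = A * S(x)
  have hAS : ∀ x : ℝ, sinhxA x = A * S x := by
    intro x
    rw [hsinhO x, hS x, ← (hSsum x).tsum_mul_left A]
    exact tsum_congr fun k => by rw [mul_smul_comm, ← pow_succ']
  -- derivative of S
  have hSderiv : ∀ x : ℝ, HasDerivAt S (coshxA x) x := by
    intro x
    have hfun : S = fun y:ℝ =>
        ∑' k:ℕ, ((y:ℂ)^(2*k+1) / (Nat.factorial (2*k+1) : ℂ)) • A^(2*k) := funext hS
    rw [hfun, hcoshE x]
    set R := |x| + 1 with hR
    set r := max ‖A‖ 1 with hr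
    set C := max 1 ‖(1 : Matrix (Fin n) (Fin n) ℂ)‖ with hC
    have hr0 : (0:ℝ) ≤ r := zero_le_one.trans (le_max_right _ _)
    have hC0 : (0:ℝ) ≤ C := zero_le_one.trans (le_max_left _ _)
    have hterm : ∀ (k:ℕ) (y:ℝ), HasDerivAt
        (fun z:ℝ => ((z:ℂ)^(2*k+1) / (Nat.factorial (2*k+1) : ℂ)) • A^(2*k))
        (((y:ℂ)^(2*k) / (Nat.factorial (2*k) : ℂ)) • A^(2*k)) y := by
      intro k y
      have h1 : HasDerivAt (fun z:ℂ => z^(2*k+1) / (Nat.factorial (2*k+1) : ℂ))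
          ((((2*k+1 : ℕ)):ℂ) * (y:ℂ)^(2*k) / (Nat.factorial (2*k+1) : ℂ)) (y:ℂ) := by
        simpa using (hasDerivAt_pow (2*k+1) ((y:ℂ))).div_const (Nat.factorial (2*k+1) : ℂ)
      have h3 := (h1.comp_ofReal).smul_const (A^(2*k))
      have hsc : ((y:ℂ)^(2*k) / (Nat.factorial (2*k) : ℂ))
          = (((2*k+1 : ℕ)):ℂ) * (y:ℂ)^(2*k) / (Nat.factorial (2*k+1) : ℂ) := by
        have hfac : ((Nat.factorial (2*k+1) : ℂ)) =
            (((2*k+1 : ℕ)):ℂ) * (Nat.factorial (2*k) : ℂ) := by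
          exact_mod_cast Nat.factorial_succ (2*k)
        rw [hfac, mul_div_mul_left]
        exact_mod_cast Nat.succ_ne_zero (2*k)
      rw [hsc]
      exact h3
    have hbound : ∀ (k:ℕ) (y:ℝ), y ∈ Set.Ioo (-R) R →
        ‖((y:ℂ)^(2*k) / (Nat.factorial (2*k) : ℂ)) • A^(2*k)‖
          ≤ C * ((R*r)^(2*k) / (Nat.factorial (2*k) : ℝ)) := by
      intro k y hy
      have hyR : |y| ≤ R := by
        rw [abs_le]; constructor <;> [exact hy.1.le; exact hy.2.le]
      have hR0 : (0:ℝ) ≤ R := (abs_nonneg y).trans hyR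
      rw [norm_smul, normc]
      calc (|y|^(2*k) / (Nat.factorial (2*k) : ℝ)) * ‖A^(2*k)‖
          ≤ (R^(2*k) / (Nat.factorial (2*k) : ℝ)) * (C * r^(2*k)) := by
            refine mul_le_mul ?_ ?_ (norm_nonneg _) (by positivity)
            · gcongr
            · exact stmt7_norm_pow_le A (2*k)
      _ = C * ((R*r)^(2*k) / (Nat.factorial (2*k) : ℝ)) := by rw [mul_pow]; ring
    have hu : Summable fun k : ℕ => C * ((R*r)^(2*k) / (Nat.factorial (2*k) : ℝ)) := by
      have h := (Real.summable_pow_div_factorial (R*r)).comp_injective inj2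
      exact h.mul_left C
    have hmemx : x ∈ Set.Ioo (-R) R := by
      constructor
      · have := neg_abs_le x; simp only [hR]; linarith
      · have := le_abs_self x; simp only [hR]; linarith
    exact hasDerivAt_tsum_of_isPreconnected hu isOpen_Ioo (convex_Ioo _ _).isPreconnected
      (fun k y _ => hterm k y) hbound hmemx (hSsum x) hmemx
  -- derivative of exp
  have hDexp : ∀ (Bm : Matrix (Fin n) (Fin n) ℂ) (x : ℝ),
      HasDerivAt (fun y:ℝ => NormedSpace.exp ((y:ℂ) • Bm))
        (Bm * NormedSpace.exp ((x:ℂ) • Bm)) x := by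
    intro Bm x
    have h := hasDerivAt_exp_smul_const' (𝕂 := ℝ) Bm x
    have hsm : ∀ y:ℝ, (y:ℂ) • Bm = y • Bm := fun y => by
      rw [← algebraMap_smul ℂ y Bm, Complex.coe_algebraMap]
    simp only [hsm]
    exact h
  have hDcosh : ∀ x : ℝ, HasDerivAt coshxA (A * sinhxA x) x := by
    intro x
    have hfun : coshxA = fun y:ℝ => (2:ℂ)⁻¹ •
        (NormedSpace.exp ((y:ℂ) • A) + NormedSpace.exp ((y:ℂ) • (-A))) := by
      funext y; rw [hcosh y]; simp only [smul_neg]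
    rw [hfun, hsinh x]
    have h := ((hDexp A x).add (hDexp (-A) x)).const_smul ((2:ℂ)⁻¹)
    refine h.congr_deriv ?_
    simp only [smul_neg, mul_smul_comm, neg_mul, mul_neg, mul_add, mul_sub, sub_eq_add_neg,
      neg_neg]
  have hDsinh : ∀ x : ℝ, HasDerivAt sinhxA (A * coshxA x) x := by
    intro x
    have hfun : sinhxA = fun y:ℝ => (2:ℂ)⁻¹ •
        (NormedSpace.exp ((y:ℂ) • A) - NormedSpace.exp ((y:ℂ) • (-A))) := by
      funext y; rw [hsinh y]; simp only [smul_neg]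
    rw [hfun, hcosh x]
    have h := ((hDexp A x).sub (hDexp (-A) x)).const_smul ((2:ℂ)⁻¹)
    refine h.congr_deriv ?_
    simp only [smul_neg, mul_smul_comm, neg_mul, mul_neg, mul_add, mul_sub, sub_eq_add_neg,
      neg_neg]
  -- mulVec preserves derivatives
  have hmv : ∀ {F : ℝ → Matrix (Fin n) (Fin n) ℂ} {F' : Matrix (Fin n) (Fin n) ℂ} {x : ℝ}
      (w : Fin n → ℂ), HasDerivAt F F' x → HasDerivAt (fun y => F y *ᵥ w) (F' *ᵥ w) x := by
    intro F F' x w h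
    let l : Matrix (Fin n) (Fin n) ℂ →ₗ[ℂ] (Fin n → ℂ) :=
      { toFun := fun Mm => Mm *ᵥ w
        map_add' := fun Mm Nm => Matrix.add_mulVec Mm Nm w
        map_smul' := fun c Mm => Matrix.smul_mulVec c Mm w }
    let lc : Matrix (Fin n) (Fin n) ℂ →L[ℝ] (Fin n → ℂ) :=
      { toLinearMap := l.restrictScalars ℝ
        cont := l.continuous_of_finiteDimensional }
    exact lc.hasFDerivAt.comp_hasDerivAt x h
  set v := A *ᵥ B₂ + B₁ with hv
  have hL₂fun : L₂ = fun x => -(S x *ᵥ v) + coshxA x *ᵥ Q := funext hL₂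
  have hDL₂ : ∀ x : ℝ, HasDerivAt L₂ (-(coshxA x *ᵥ v) + (A * sinhxA x) *ᵥ Q) x := by
    intro x
    rw [hL₂fun]
    exact ((hmv v (hSderiv x)).neg).add (hmv Q (hDcosh x))
  have hderivL₂ : deriv L₂ = fun x => -(coshxA x *ᵥ v) + (A * sinhxA x) *ᵥ Q :=
    funext fun x => (hDL₂ x).deriv
  have hDDL₂ : ∀ x : ℝ,
      HasDerivAt (deriv L₂) (-((A * sinhxA x) *ᵥ v) + (A * (A * coshxA x)) *ᵥ Q) x := by
    intro x
    rw [hderivL₂]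
    exact ((hmv v (hDcosh x)).neg).add (hmv Q ((hDsinh x).const_mul A))
  have h0c : coshxA 0 = 1 := by
    rw [hcosh 0]
    simp only [Complex.ofReal_zero, zero_smul, neg_zero, NormedSpace.exp_zero]
    rw [← two_smul ℂ (1 : Matrix (Fin n) (Fin n) ℂ), smul_smul]
    norm_num
  have h0s : sinhxA 0 = 0 := by
    rw [hsinh 0]
    simp only [Complex.ofReal_zero, zero_smul, neg_zero, NormedSpace.exp_zero, sub_self,
      smul_zero]
  have hS1 : S 1 = GA := by
    rw [hS 1, hGA]
    exact tsum_congr fun k => by norm_num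
  have hMQ : M *ᵥ Q = A *ᵥ B₄ + B₃ +
      (coshxA 1 + ((α : ℂ) • (1 : Matrix (Fin n) (Fin n) ℂ) + (β : ℂ) • A) * GA) *ᵥ v := by
    rw [hQ, Matrix.mulVec_mulVec, Matrix.mul_nonsing_inv M
      ((Matrix.isUnit_iff_isUnit_det M).mp hMunit), Matrix.one_mulVec]
  refine ⟨fun x => ⟨?_, ?_⟩, ?_, ?_, ?_, ?_⟩
  · rw [(hDDL₂ x).deriv, hL₂ x, hAS x]
    simp only [Matrix.mulVec_add, Matrix.mulVec_neg, ← Matrix.mulVec_mulVec]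
  · rw [hL₁ x, hL₂ x, hAS x]
    simp only [Matrix.mulVec_add, Matrix.mulVec_neg, ← Matrix.mulVec_mulVec]
  · rw [hL₃, hderivL₂]
    simp only [h0c, h0s, mul_zero, Matrix.one_mulVec, Matrix.zero_mulVec, Matrix.mulVec_neg,
      hv]
    abel
  · rw [hL₃]; simp
  · rw [hL₄, hderivL₂, hL₂ 1, hS1]
    rw [hM] at hMQ
    simp only [Matrix.add_mulVec, Matrix.smul_mulVec, Matrix.mulVec_add,
      Matrix.mulVec_sub, Matrix.mulVec_neg, Matrix.mulVec_smul, ← Matrix.mulVec_mulVec,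
      add_mul, smul_mul_assoc, one_mul, Matrix.one_mulVec] at hMQ ⊢
    linear_combination (norm := module) -hMQ
  · rw [hL₄, hL₂ 1, hS1]
    module
end

section
/- Let A be an n×n real matrix and b ∈ ℝⁿ. If the pair (A, b) is controllable, i.e., the vectors b, A b, A² b, …, A^{n−1} b span ℝⁿ, then there exists a vector K ∈ ℝⁿ such that the matrix A + b·Kᵀ is Hurwitz, i.e., every eigenvalue μ ∈ ℂ of A + b·Kᵀ satisfies Re(μ) < 0. -/
open scoped Matrix
open Finset

private lemma sum_ite_lt_aux {R : Type*} [AddCommMonoid R] (N n : ℕ) (hN : N ≤ n) (f : ℕ → R) :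
    ∑ j ∈ range n, (if j < N then f j else 0) = ∑ j ∈ range N, f j := by
  rw [← Finset.sum_subset (Finset.range_subset_range.mpr hN)
      (fun x _ hx => if_neg (by simpa using hx))]
  exact Finset.sum_congr rfl fun x hx => if_pos (Finset.mem_range.mp hx)

/-- Let `A` be an `n × n` real matrix and `b ∈ ℝⁿ`. If the pair `(A, b)`
is controllable (the vectors `b, Ab, …, A^(n−1)b` span `ℝⁿ`), then there exists `K ∈ ℝⁿ`
such that `A + b Kᵀ` is Hurwitz: every complex eigenvalue `μ` of `A + b Kᵀ` satisfies
`Re μ < 0`. -/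
theorem stmt_10 (n : ℕ) (A : Matrix (Fin n) (Fin n) ℝ) (b : Fin n → ℝ)
    (hctrb : Submodule.span ℝ (Set.range fun i : Fin n => (A ^ (i : ℕ)) *ᵥ b) = ⊤) :
    ∃ K : Fin n → ℝ,
      ∀ μ ∈ spectrum ℂ ((A + Matrix.vecMulVec b K).map (Complex.ofReal)),
        μ.re < 0 := by
  match n, A, b, hctrb with
  | 0, A, b, hctrb =>
    refine ⟨0, fun μ hμ => ?_⟩
    rw [spectrum.mem_iff] at hμ
    exact absurd (isUnit_of_subsingleton _) hμ
  | m + 1, A, b, hctrb =>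
  -- sum-linearity helpers
  have hsum_mv : ∀ (s : Finset ℕ) (f : ℕ → Matrix (Fin (m+1)) (Fin (m+1)) ℝ),
      (∑ j ∈ s, f j) *ᵥ b = ∑ j ∈ s, f j *ᵥ b := by
    intro s f; ext i
    simp only [Matrix.mulVec, dotProduct, Finset.sum_apply, Finset.sum_mul]
    rw [Finset.sum_comm]
    exact Finset.sum_congr rfl fun x _ => by rw [Matrix.sum_apply, Finset.sum_mul]
  have hmv_sum : ∀ (s : Finset ℕ) (g : ℕ → Fin (m+1) → ℝ),
      A *ᵥ (∑ j ∈ s, g j) = ∑ j ∈ s, A *ᵥ g j := by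
    intro s g
    simpa only [Matrix.mulVecLin_apply] using map_sum A.mulVecLin g s
  -- characteristic polynomial coefficients
  set c : ℕ → ℝ := fun j => A.charpoly.coeff j with hc_def
  have hdeg : A.charpoly.natDegree = m + 1 := by
    rw [Matrix.charpoly_natDegree_eq_dim, Fintype.card_fin]
  have hc_top : c (m + 1) = 1 := by
    have := (Matrix.charpoly_monic A).coeff_natDegree
    rwa [hdeg] at this
  -- Cayley-Hamilton, applied to b
  have hCH : ∑ j ∈ range (m + 2), c j • ((A ^ j) *ᵥ b) = 0 := by
    have h0 : ∑ j ∈ range (m + 2), c j • A ^ j = 0 := by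
      have := Polynomial.aeval_eq_sum_range (p := A.charpoly) A
      rw [hdeg, Matrix.aeval_self_charpoly] at this
      exact this.symm
    calc ∑ j ∈ range (m + 2), c j • ((A ^ j) *ᵥ b)
        = (∑ j ∈ range (m + 2), c j • A ^ j) *ᵥ b := by
          rw [hsum_mv]
          exact Finset.sum_congr rfl fun j _ => by rw [Matrix.smul_mulVec]
      _ = 0 := by rw [h0, Matrix.zero_mulVec]
  -- the new basis vectors
  set v : ℕ → Fin (m + 1) → ℝ :=
    fun k => ∑ j ∈ range (m + 1 - k), c (k + 1 + j) • ((A ^ j) *ᵥ b) with hv_def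
  have hv_eq : ∀ k : ℕ, v k = ∑ j ∈ range (m + 1 - k), c (k + 1 + j) • ((A ^ j) *ᵥ b) :=
    fun _ => rfl
  have hv_last : v m = b := by
    rw [hv_eq, show m + 1 - m = 1 from by omega, Finset.sum_range_one]
    simp [hc_top]
  -- the key recurrence
  have hArec : ∀ k : ℕ, k < m + 1 →
      A *ᵥ v k = (if k = 0 then 0 else v (k - 1)) - c k • b := by
    intro k hk
    have hAv : A *ᵥ v k = ∑ j ∈ range (m + 1 - k), c (k + 1 + j) • ((A ^ (j + 1)) *ᵥ b) := by
      rw [hv_eq, hmv_sum]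
      refine Finset.sum_congr rfl fun j _ => ?_
      rw [Matrix.mulVec_smul, Matrix.mulVec_mulVec, ← pow_succ']
    match k with
    | 0 =>
      have h2 := hCH
      rw [Finset.sum_range_succ'] at h2
      rw [if_pos rfl, hAv, Nat.sub_zero, zero_sub]
      have h3 : ∑ j ∈ range (m + 1), c (0 + 1 + j) • ((A ^ (j + 1)) *ᵥ b)
          = ∑ j ∈ range (m + 1), c (j + 1) • ((A ^ (j + 1)) *ᵥ b) :=
        Finset.sum_congr rfl fun j _ => by rw [show 0 + 1 + j = j + 1 from by omega]
      rw [h3]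
      have h4 : c 0 • ((A ^ 0) *ᵥ b) = c 0 • b := by rw [pow_zero, Matrix.one_mulVec]
      rw [h4] at h2
      exact eq_neg_of_add_eq_zero_left h2
    | k' + 1 =>
      rw [if_neg (Nat.succ_ne_zero k'), hAv, Nat.succ_sub_one, hv_eq,
        show m + 1 - k' = (m - k') + 1 from by omega, Finset.sum_range_succ']
      have h3 : ∑ j ∈ range (m - k'), c (k' + 1 + (j + 1)) • ((A ^ (j + 1)) *ᵥ b)
          = ∑ j ∈ range (m + 1 - (k' + 1)), c (k' + 1 + 1 + j) • ((A ^ (j + 1)) *ᵥ b) := by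
        rw [show m + 1 - (k' + 1) = m - k' from by omega]
        exact Finset.sum_congr rfl fun j _ => by rw [show k' + 1 + (j + 1) = k' + 1 + 1 + j from by omega]
      rw [h3, show k' + 1 + 0 = k' + 1 from rfl, pow_zero, Matrix.one_mulVec]
      exact (add_sub_cancel_right _ _).symm
  -- controllability matrix and triangular transform
  set U : Matrix (Fin (m+1)) (Fin (m+1)) ℝ :=
    Matrix.of (fun i k : Fin (m+1) => ((A ^ (k:ℕ)) *ᵥ b) i) with hU_def
  set T : Matrix (Fin (m+1)) (Fin (m+1)) ℝ :=
    Matrix.of (fun j k : Fin (m+1) =>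
      if (j:ℕ) + (k:ℕ) < m + 1 then c ((k:ℕ) + 1 + (j:ℕ)) else 0) with hT_def
  set W : Matrix (Fin (m+1)) (Fin (m+1)) ℝ := U * T with hW_def
  have hW_col : ∀ (i k : Fin (m+1)), W i k = v (k:ℕ) i := by
    intro i k
    rw [hW_def, Matrix.mul_apply]
    have h1 : ∀ j : Fin (m+1), U i j * T j k
        = if (j:ℕ) < m + 1 - (k:ℕ) then c ((k:ℕ) + 1 + (j:ℕ)) * ((A ^ (j:ℕ)) *ᵥ b) i else 0 := by
      intro j
      rw [hU_def, hT_def]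
      simp only [Matrix.of_apply]
      by_cases h : (j:ℕ) + (k:ℕ) < m + 1
      · rw [if_pos h, if_pos (by omega), mul_comm]
      · rw [if_neg h, if_neg (by omega), mul_zero]
    rw [Finset.sum_congr rfl fun j _ => h1 j]
    rw [Fin.sum_univ_eq_sum_range
      (fun j => if j < m + 1 - (k:ℕ) then c ((k:ℕ) + 1 + j) * ((A ^ j) *ᵥ b) i else 0)]
    rw [sum_ite_lt_aux _ _ (by omega), hv_eq, Finset.sum_apply]
    exact (Finset.sum_congr rfl fun j _ => by rw [Pi.smul_apply, smul_eq_mul]).symm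
  have hUsurj : Function.Surjective U.mulVec := by
    intro y
    have hy : y ∈ Submodule.span ℝ (Set.range fun i : Fin (m+1) => (A ^ (i:ℕ)) *ᵥ b) :=
      hctrb ▸ Submodule.mem_top
    rw [Submodule.mem_span_range_iff_exists_fun] at hy
    obtain ⟨g, hg⟩ := hy
    refine ⟨g, ?_⟩
    ext i
    simp only [Matrix.mulVec, dotProduct]
    rw [← hg, Finset.sum_apply]
    exact Finset.sum_congr rfl fun k _ => by
      rw [hU_def, Matrix.of_apply, Pi.smul_apply, smul_eq_mul, mul_comm]
  have hUunit : IsUnit U := Matrix.mulVec_surjective_iff_isUnit.mp hUsurj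
  have hTunit : IsUnit T := by
    rw [Matrix.isUnit_iff_isUnit_det, isUnit_iff_ne_zero]
    have hrev : ∀ q : Fin (m+1), ((Fin.revPerm q : Fin (m+1)) : ℕ) = m - (q:ℕ) := by
      intro q
      simp [Fin.revPerm_apply, Fin.val_rev]
    have hts : (T.submatrix id ⇑(Fin.revPerm : Equiv.Perm (Fin (m+1)))).det = 1 := by
      have htri : (T.submatrix id ⇑(Fin.revPerm : Equiv.Perm (Fin (m+1)))).BlockTriangular id := by
        intro p q hpq
        rw [Matrix.submatrix_apply, hT_def]
        simp only [Matrix.of_apply, id_eq]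
        refine if_neg ?_
        have hq := hrev q
        have hp : (q:ℕ) < (p:ℕ) := hpq
        have hq2 : (q:ℕ) < m + 1 := q.isLt
        omega
      rw [Matrix.det_of_upperTriangular htri]
      refine Finset.prod_eq_one fun p _ => ?_
      rw [Matrix.submatrix_apply, hT_def]
      simp only [Matrix.of_apply, id_eq]
      have hq := hrev p
      have hp : (p:ℕ) < m + 1 := p.isLt
      rw [if_pos (by omega), show ((Fin.revPerm p : Fin (m+1)) : ℕ) + 1 + (p:ℕ) = m + 1 from by omega]
      exact hc_top
    rw [Matrix.det_permute'] at hts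
    intro h
    rw [h, mul_zero] at hts
    exact zero_ne_one hts
  have hWunit : IsUnit W := hW_def ▸ hUunit.mul hTunit
  have hdetW : W.det ≠ 0 := by
    rw [← isUnit_iff_ne_zero, ← Matrix.isUnit_iff_isUnit_det]
    exact hWunit
  -- companion-type matrices
  set q : ℕ → ℝ := fun k => ((m+1).choose k : ℝ) with hq_def
  set d : Fin (m+1) → ℝ := fun k => c (k:ℕ) - q (k:ℕ) with hd_def
  set Cm : Matrix (Fin (m+1)) (Fin (m+1)) ℝ := Matrix.of (fun i k : Fin (m+1) =>
    (if (i:ℕ) + 1 = (k:ℕ) then 1 else 0) - (if (i:ℕ) = m then c (k:ℕ) else 0)) with hCm_def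
  set Qm : Matrix (Fin (m+1)) (Fin (m+1)) ℝ := Matrix.of (fun i k : Fin (m+1) =>
    (if (i:ℕ) + 1 = (k:ℕ) then 1 else 0) - (if (i:ℕ) = m then q (k:ℕ) else 0)) with hQm_def
  have hAW : A * W = W * Cm := by
    ext i k
    rw [Matrix.mul_apply, Matrix.mul_apply]
    have hL : ∑ j, A i j * W j k = (A *ᵥ v (k:ℕ)) i := by
      show _ = ∑ j, A i j * v (k:ℕ) j
      exact Finset.sum_congr rfl fun j _ => by rw [hW_col]
    have hR : ∑ j, W i j * Cm j k =
        (if (k:ℕ) = 0 then 0 else v ((k:ℕ) - 1) i) - c (k:ℕ) * b i := by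
      have h1 : ∀ j : Fin (m+1), W i j * Cm j k =
          (if (j:ℕ) + 1 = (k:ℕ) then v (j:ℕ) i else 0)
          - (if (j:ℕ) = m then c (k:ℕ) * v (j:ℕ) i else 0) := by
        intro j
        rw [hW_col, hCm_def]
        simp only [Matrix.of_apply]
        rw [mul_sub]
        congr 1
        · split_ifs <;> ring
        · split_ifs <;> ring
      rw [Finset.sum_congr rfl fun j _ => h1 j, Finset.sum_sub_distrib]
      congr 1
      · by_cases hk : (k:ℕ) = 0
        · rw [if_pos hk]
          exact Finset.sum_eq_zero fun j _ => if_neg (by omega)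
        · rw [if_neg hk]
          rw [Finset.sum_eq_single_of_mem (⟨(k:ℕ) - 1, by omega⟩ : Fin (m+1)) (Finset.mem_univ _)
            (fun j _ hj => if_neg fun hcc => hj (Fin.ext (by simp at hcc ⊢; omega)))]
          rw [if_pos (show ((k:ℕ) - 1) + 1 = (k:ℕ) from by omega)]
      · rw [Finset.sum_eq_single_of_mem (⟨m, by omega⟩ : Fin (m+1)) (Finset.mem_univ _)
          (fun j _ hj => if_neg fun hcc => hj (Fin.ext (by simpa using hcc))),
          if_pos rfl, hv_last]
    have hA2 : (A *ᵥ v (k:ℕ)) i = (if (k:ℕ) = 0 then 0 else v ((k:ℕ)-1) i) - c (k:ℕ) * b i := by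
      rw [hArec (k:ℕ) k.isLt, Pi.sub_apply, Pi.smul_apply, smul_eq_mul,
        apply_ite (fun f : Fin (m+1) → ℝ => f i), Pi.zero_apply]
    rw [hL, hA2, hR]
  -- the feedback vector
  set K : Fin (m+1) → ℝ := Matrix.vecMul d W⁻¹ with hK_def
  have hKW : Matrix.vecMul K W = d := by
    rw [hK_def, Matrix.vecMul_vecMul,
      Matrix.nonsing_inv_mul W ((Matrix.isUnit_iff_isUnit_det W).mp hWunit), Matrix.vecMul_one]
  have hMW : (A + Matrix.vecMulVec b K) * W = W * Qm := by
    rw [Matrix.add_mul, hAW]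
    ext i k
    rw [Matrix.add_apply, Matrix.mul_apply, Matrix.mul_apply, Matrix.mul_apply]
    have hbk : ∑ j, Matrix.vecMulVec b K i j * W j k = b i * d k := by
      have h1 : ∀ j, Matrix.vecMulVec b K i j * W j k = b i * (K j * W j k) := by
        intro j; rw [Matrix.vecMulVec_apply]; ring
      rw [Finset.sum_congr rfl fun j _ => h1 j, ← Finset.mul_sum]
      congr 1
      exact congrFun hKW k
    rw [hbk]
    have hdiff : ∀ j : Fin (m+1), W i j * Qm j k - W i j * Cm j k
        = if (j:ℕ) = m then v (j:ℕ) i * (c (k:ℕ) - q (k:ℕ)) else 0 := by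
      intro j
      rw [hW_col, hCm_def, hQm_def]
      simp only [Matrix.of_apply]
      split_ifs <;> ring
    have h2 : ∑ j, W i j * Qm j k - ∑ j, W i j * Cm j k = b i * d k := by
      rw [← Finset.sum_sub_distrib, Finset.sum_congr rfl fun j _ => hdiff j,
        Finset.sum_eq_single_of_mem (⟨m, by omega⟩ : Fin (m+1)) (Finset.mem_univ _)
          (fun j _ hj => if_neg fun hcc => hj (Fin.ext (by simpa using hcc))),
        if_pos rfl, hv_last, hd_def]
    linarith [h2]
  -- conclusion: spectrum analysis
  refine ⟨K, fun μ hμ => ?_⟩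
  rw [spectrum.mem_iff, Algebra.algebraMap_eq_smul_one] at hμ
  have hco : ⇑Complex.ofRealHom = Complex.ofReal := rfl
  set M' := (A + Matrix.vecMulVec b K).map Complex.ofReal with hM'_def
  set W' := W.map Complex.ofReal with hW'_def
  set Q' := Qm.map Complex.ofReal with hQ'_def
  have hmapmul : M' * W' = W' * Q' := by
    rw [hM'_def, hW'_def, hQ'_def, ← hco, ← Matrix.map_mul, ← Matrix.map_mul, hMW]
  have hW'det : W'.det ≠ 0 := by
    have hwd : W'.det = Complex.ofReal W.det := by
      rw [hW'_def, ← hco, ← RingHom.mapMatrix_apply]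
      exact (RingHom.map_det Complex.ofRealHom W).symm
    rw [hwd]
    simpa using hdetW
  have hfac : (μ • (1 : Matrix (Fin (m+1)) (Fin (m+1)) ℂ) - M') * W' = W' * (μ • 1 - Q') := by
    rw [Matrix.sub_mul, Matrix.mul_sub, hmapmul, Matrix.smul_mul, Matrix.mul_smul, one_mul, mul_one]
  have hdet0 : (μ • (1 : Matrix (Fin (m+1)) (Fin (m+1)) ℂ) - Q').det = 0 := by
    have hdetM : (μ • (1 : Matrix (Fin (m+1)) (Fin (m+1)) ℂ) - M').det = 0 := by
      by_contra hd
      exact hμ ((Matrix.isUnit_iff_isUnit_det _).mpr (isUnit_iff_ne_zero.mpr hd))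
    have h5 : (μ • (1 : Matrix (Fin (m+1)) (Fin (m+1)) ℂ) - M').det * W'.det
        = W'.det * (μ • 1 - Q').det := by
      rw [← Matrix.det_mul, hfac, Matrix.det_mul]
    rw [hdetM, zero_mul] at h5
    exact (mul_eq_zero.mp h5.symm).resolve_left hW'det
  obtain ⟨vv, hvv0, hvvz⟩ := (Matrix.exists_mulVec_eq_zero_iff).mpr hdet0
  have heig : Q' *ᵥ vv = μ • vv := by
    have h6 := hvvz
    rw [Matrix.sub_mulVec, Matrix.smul_mulVec, Matrix.one_mulVec, sub_eq_zero] at h6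
    exact h6.symm
  have hcomp : ∀ i : Fin (m+1),
      (if h : (i:ℕ) + 1 < m + 1 then vv ⟨(i:ℕ)+1, h⟩ else 0)
        - (if (i:ℕ) = m then ∑ k : Fin (m+1), (q (k:ℕ) : ℂ) * vv k else 0) = μ * vv i := by
    intro i
    have h7 := congrFun heig i
    have h8 : (Q' *ᵥ vv) i = ∑ k : Fin (m+1),
        (((if (i:ℕ) + 1 = (k:ℕ) then (1:ℂ) else 0)
          - (if (i:ℕ) = m then (q (k:ℕ) : ℂ) else 0)) * vv k) := by
      show ∑ k, Q' i k * vv k = _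
      refine Finset.sum_congr rfl fun k _ => ?_
      rw [hQ'_def, Matrix.map_apply, hQm_def]
      simp only [Matrix.of_apply]
      rw [Complex.ofReal_sub, apply_ite Complex.ofReal, apply_ite Complex.ofReal,
        Complex.ofReal_one, Complex.ofReal_zero]
    rw [h8, Pi.smul_apply, smul_eq_mul] at h7
    rw [← h7, Finset.sum_congr rfl fun k _ => sub_mul _ _ (vv k), Finset.sum_sub_distrib]
    congr 1
    · by_cases h : (i:ℕ) + 1 < m + 1
      · rw [dif_pos h,
          Finset.sum_eq_single_of_mem (⟨(i:ℕ)+1, h⟩ : Fin (m+1)) (Finset.mem_univ _)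
            (fun j _ hj => by
              rw [if_neg fun hcc => hj (Fin.ext (by simpa using hcc.symm)), zero_mul]),
          if_pos rfl, one_mul]
      · rw [dif_neg h]
        exact (Finset.sum_eq_zero fun j _ => by
          rw [if_neg (by have := j.isLt; omega), zero_mul]).symm
    · by_cases hm : (i:ℕ) = m
      · rw [if_pos hm]
        exact (Finset.sum_congr rfl fun j _ => by rw [if_pos hm]).symm
      · rw [if_neg hm]
        exact (Finset.sum_eq_zero fun j _ => by rw [if_neg hm, zero_mul]).symm
  have hv0 : ∀ (j : ℕ) (hj : j < m + 1), vv ⟨j, hj⟩ = μ ^ j * vv ⟨0, Nat.succ_pos m⟩ := by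
    intro j
    induction j with
    | zero => intro hj; rw [pow_zero, one_mul]
    | succ j ih =>
      intro hj
      have h9 := hcomp ⟨j, by omega⟩
      rw [dif_pos (show j + 1 < m + 1 from hj)] at h9
      rw [if_neg (show ¬ (j = m) from by omega), sub_zero] at h9
      rw [h9, ih (by omega), pow_succ]
      ring
  have hval0 : vv ⟨0, Nat.succ_pos m⟩ ≠ 0 := by
    intro h0
    apply hvv0
    funext i
    have := hv0 (i:ℕ) i.isLt
    rw [Fin.eta] at this
    rw [this, h0, mul_zero]
    rfl
  have hlast := hcomp ⟨m, Nat.lt_succ_self m⟩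
  rw [dif_neg (show ¬ (m + 1 < m + 1) from by omega),
    if_pos (show m = m from rfl), zero_sub] at hlast
  have hsum : ∑ k : Fin (m+1), ((q (k:ℕ) : ℝ) : ℂ) * vv k
      = (∑ k ∈ range (m + 1), (((m+1).choose k : ℕ) : ℂ) * μ ^ k) * vv ⟨0, Nat.succ_pos m⟩ := by
    have h1 : ∀ k : Fin (m+1), ((q (k:ℕ) : ℝ) : ℂ) * vv k
        = (((m+1).choose (k:ℕ) : ℕ) : ℂ) * μ ^ (k:ℕ) * vv ⟨0, Nat.succ_pos m⟩ := by
      intro k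
      have h2 := hv0 (k:ℕ) k.isLt
      rw [Fin.eta] at h2
      rw [h2, hq_def]
      push_cast
      ring
    rw [Finset.sum_congr rfl fun k _ => h1 k,
      Fin.sum_univ_eq_sum_range
        (fun j => (((m+1).choose j : ℕ) : ℂ) * μ ^ j * vv ⟨0, Nat.succ_pos m⟩),
      ← Finset.sum_mul]
  have hS : (μ + 1) ^ (m + 1)
      = (∑ k ∈ range (m + 1), (((m+1).choose k : ℕ) : ℂ) * μ ^ k) + μ ^ (m + 1) := by
    rw [add_pow μ 1 (m + 1), Finset.sum_range_succ, Nat.choose_self]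
    simp only [one_pow, mul_one, Nat.cast_one]
    rw [Finset.sum_congr rfl fun k _ => mul_comm (μ ^ k) ((((m+1).choose k : ℕ) : ℂ))]
  have hm' := hv0 m (Nat.lt_succ_self m)
  have hzero : ((μ + 1) ^ (m + 1)) * vv ⟨0, Nat.succ_pos m⟩ = 0 := by
    linear_combination (vv ⟨0, Nat.succ_pos m⟩) * hS - hsum - hlast - μ * hm'
  have hpow0 : (μ + 1) ^ (m + 1) = 0 := by
    rcases mul_eq_zero.mp hzero with h | h
    · exact h
    · exact absurd h hval0
  have hμ1 : μ = -1 := eq_neg_of_add_eq_zero_left (pow_eq_zero_iff (by omega) |>.mp hpow0)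
  rw [hμ1]
  norm_num
end

section
/- Let w : ℝ × ℝ → ℝ be twice continuously differentiable and satisfy the wave equation ∂²w/∂t²(x,t) = ∂²w/∂x²(x,t) for all x ∈ [0,1] and t ≥ 0. Define ρ(t) = ∫₀¹ x · ∂w/∂t(x,t) · ∂w/∂x(x,t) dx. Then ρ is differentiable at every t ≥ 0 with ρ'(t) = (1/2)( (∂w/∂t(1,t))² + (∂w/∂x(1,t))² ) − (1/2) ∫₀¹ ( (∂w/∂t(x,t))² + (∂w/∂x(x,t))² ) dx. -/
open intervalIntegral Set Metric

/-- Slice derivative in the second variable. -/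
private lemma slice_t {G : ℝ × ℝ → ℝ} {x t : ℝ} (hG : DifferentiableAt ℝ G (x, t)) :
    HasDerivAt (fun s => G (x, s)) (fderiv ℝ G (x, t) (0, 1)) t := by
  have h : HasDerivAt (fun s : ℝ => ((x, s) : ℝ × ℝ)) (0, 1) t :=
    (hasDerivAt_const t x).prodMk (hasDerivAt_id t)
  exact hG.hasFDerivAt.comp_hasDerivAt t h

/-- Slice derivative in the first variable. -/
private lemma slice_x {G : ℝ × ℝ → ℝ} {x t : ℝ} (hG : DifferentiableAt ℝ G (x, t)) :
    HasDerivAt (fun y => G (y, t)) (fderiv ℝ G (x, t) (1, 0)) x := by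
  have h : HasDerivAt (fun y : ℝ => ((y, t) : ℝ × ℝ)) (1, 0) x :=
    (hasDerivAt_id x).prodMk (hasDerivAt_const x t)
  exact hG.hasFDerivAt.comp_hasDerivAt x h

/-- Let `w` (written curried, `w x t`) be twice continuously
differentiable on `ℝ × ℝ` and satisfy `∂²w/∂t² = ∂²w/∂x²` for `x ∈ [0,1]`, `t ≥ 0`.
With `ρ(t) = ∫₀¹ x · ∂w/∂t(x,t) · ∂w/∂x(x,t) dx`, `ρ` is differentiable at every `t ≥ 0`
with `ρ'(t) = ½((∂w/∂t(1,t))² + (∂w/∂x(1,t))²) − ½∫₀¹ ((∂w/∂t(x,t))² + (∂w/∂x(x,t))²) dx`. -/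
theorem stmt_14 (w : ℝ → ℝ → ℝ) (hw : ContDiff ℝ 2 (Function.uncurry w))
    (hwave : ∀ x ∈ Set.Icc (0 : ℝ) 1, ∀ t : ℝ, 0 ≤ t →
      deriv (deriv (w x)) t = deriv (fun y => deriv (fun y' => w y' t) y) x) :
    ∀ t : ℝ, 0 ≤ t →
      HasDerivAt
        (fun s : ℝ => ∫ x in (0 : ℝ)..1, x * deriv (w x) s * deriv (fun y => w y s) x)
        ((1 / 2) * ((deriv (w 1) t) ^ 2 + (deriv (fun y => w y t) 1) ^ 2) -
          (1 / 2) * ∫ x in (0 : ℝ)..1,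
            ((deriv (w x) t) ^ 2 + (deriv (fun y => w y t) x) ^ 2)) t := by
  intro t ht
  set W : ℝ × ℝ → ℝ := Function.uncurry w with hWdef
  have hWd : Differentiable ℝ W := hw.differentiable (by norm_num)
  have hW1 : ContDiff ℝ 1 (fderiv ℝ W) := hw.fderiv_right (by norm_num)
  have hW1d : Differentiable ℝ (fderiv ℝ W) := hW1.differentiable one_ne_zero
  set U : ℝ × ℝ → ℝ := fun p => fderiv ℝ W p (0, 1) with hUdef
  set V : ℝ × ℝ → ℝ := fun p => fderiv ℝ W p (1, 0) with hVdef
  have hUc : ContDiff ℝ 1 U :=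
    (ContinuousLinearMap.apply ℝ ℝ ((0 : ℝ), (1 : ℝ))).contDiff.comp hW1
  have hVc : ContDiff ℝ 1 V :=
    (ContinuousLinearMap.apply ℝ ℝ ((1 : ℝ), (0 : ℝ))).contDiff.comp hW1
  have hUd : Differentiable ℝ U := hUc.differentiable one_ne_zero
  have hVd : Differentiable ℝ V := hVc.differentiable one_ne_zero
  -- slice derivatives of w
  have hwt : ∀ x s : ℝ, HasDerivAt (w x) (U (x, s)) s := fun x s =>
    slice_t (hWd (x, s))
  have hwx : ∀ x s : ℝ, HasDerivAt (fun y => w y s) (V (x, s)) x := fun x s =>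
    slice_x (hWd (x, s))
  have hU_eq : ∀ x s : ℝ, deriv (w x) s = U (x, s) := fun x s => (hwt x s).deriv
  have hV_eq : ∀ x s : ℝ, deriv (fun y => w y s) x = V (x, s) := fun x s => (hwx x s).deriv
  -- second partials
  set f'' : ℝ × ℝ → (ℝ × ℝ) →L[ℝ] (ℝ × ℝ) →L[ℝ] ℝ := fun p => fderiv ℝ (fderiv ℝ W) p
  have hUder : ∀ p : ℝ × ℝ, HasFDerivAt U
      ((ContinuousLinearMap.apply ℝ ℝ ((0 : ℝ), (1 : ℝ))).comp (f'' p)) p := fun p =>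
    (ContinuousLinearMap.apply ℝ ℝ ((0 : ℝ), (1 : ℝ))).hasFDerivAt.comp p (hW1d p).hasFDerivAt
  have hVder : ∀ p : ℝ × ℝ, HasFDerivAt V
      ((ContinuousLinearMap.apply ℝ ℝ ((1 : ℝ), (0 : ℝ))).comp (f'' p)) p := fun p =>
    (ContinuousLinearMap.apply ℝ ℝ ((1 : ℝ), (0 : ℝ))).hasFDerivAt.comp p (hW1d p).hasFDerivAt
  have hUfd : ∀ (p : ℝ × ℝ) (e : ℝ × ℝ), fderiv ℝ U p e = f'' p e (0, 1) := fun p e => by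
    rw [(hUder p).fderiv]; rfl
  have hVfd : ∀ (p : ℝ × ℝ) (e : ℝ × ℝ), fderiv ℝ V p e = f'' p e (1, 0) := fun p e => by
    rw [(hVder p).fderiv]; rfl
  have hsym : ∀ (p : ℝ × ℝ) (a b : ℝ × ℝ), f'' p a b = f'' p b a := fun p a b =>
    (hw.contDiffAt.isSymmSndFDerivAt (by norm_num)) a b
  set Ut : ℝ × ℝ → ℝ := fun p => fderiv ℝ U p (0, 1) with hUtdef
  set Ux : ℝ × ℝ → ℝ := fun p => fderiv ℝ U p (1, 0) with hUxdef
  set Vt : ℝ × ℝ → ℝ := fun p => fderiv ℝ V p (0, 1) with hVtdef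
  set Vx : ℝ × ℝ → ℝ := fun p => fderiv ℝ V p (1, 0) with hVxdef
  have hUtc : Continuous Ut :=
    (ContinuousLinearMap.apply ℝ ℝ ((0 : ℝ), (1 : ℝ))).continuous.comp
      (hUc.continuous_fderiv one_ne_zero)
  have hVtc : Continuous Vt :=
    (ContinuousLinearMap.apply ℝ ℝ ((0 : ℝ), (1 : ℝ))).continuous.comp
      (hVc.continuous_fderiv one_ne_zero)
  have hUxc : Continuous Ux :=
    (ContinuousLinearMap.apply ℝ ℝ ((1 : ℝ), (0 : ℝ))).continuous.comp
      (hUc.continuous_fderiv one_ne_zero)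
  have hVxc : Continuous Vx :=
    (ContinuousLinearMap.apply ℝ ℝ ((1 : ℝ), (0 : ℝ))).continuous.comp
      (hVc.continuous_fderiv one_ne_zero)
  -- mixed partials commute: Vt = Ux
  have hVtUx : ∀ p : ℝ × ℝ, Vt p = Ux p := fun p => by
    show fderiv ℝ V p (0, 1) = fderiv ℝ U p (1, 0)
    rw [hUfd, hVfd, hsym]
  -- wave equation gives Ut = Vx on [0,1] at time t
  have hUtVx : ∀ x ∈ Set.Icc (0 : ℝ) 1, Ut (x, t) = Vx (x, t) := by
    intro x hx
    have h1 : deriv (deriv (w x)) t = Ut (x, t) := by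
      have : deriv (w x) = fun s => U (x, s) := funext fun s => hU_eq x s
      rw [this]
      exact (slice_t (hUd (x, t))).deriv
    have h2 : deriv (fun y => deriv (fun y' => w y' t) y) x = Vx (x, t) := by
      have : (fun y => deriv (fun y' => w y' t) y) = fun y => V (y, t) :=
        funext fun y => hV_eq y t
      rw [this]
      exact (slice_x (hVd (x, t))).deriv
    rw [← h1, ← h2, hwave x hx t ht]
  -- the integrand and its time derivative
  set F : ℝ → ℝ → ℝ := fun s x => x * U (x, s) * V (x, s) with hFdef
  set F' : ℝ → ℝ → ℝ := fun s x =>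
    (0 * U (x, s) + x * Ut (x, s)) * V (x, s) + x * U (x, s) * Vt (x, s) with hF'def
  have hUcont : Continuous U := hUc.continuous
  have hVcont : Continuous V := hVc.continuous
  have hFcont : ∀ s, Continuous (F s) := fun s => by
    apply Continuous.mul
    · exact (continuous_id.mul ((hUcont.comp (continuous_id.prodMk continuous_const))))
    · exact hVcont.comp (continuous_id.prodMk continuous_const)
  have hF'cont : ∀ s, Continuous (F' s) := fun s => by
    simp only [hF'def]; fun_prop
  have hdiffF : ∀ x s : ℝ, HasDerivAt (fun s' => F s' x) (F' s x) s := by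
    intro x s
    have h1 : HasDerivAt (fun s' => x * U (x, s')) (0 * U (x, s) + x * Ut (x, s)) s :=
      (hasDerivAt_const s x).mul (slice_t (hUd (x, s)))
    have h2 : HasDerivAt (fun s' => V (x, s')) (Vt (x, s)) s :=
      slice_t (hVd (x, s))
    exact h1.mul h2
  -- bound on a compact neighborhood
  obtain ⟨M, hM⟩ : ∃ M, ∀ p ∈ Set.Icc (0 : ℝ) 1 ×ˢ Set.Icc (t - 1) (t + 1),
      ‖F' p.2 p.1‖ ≤ M := by
    have hcomp : IsCompact (Set.Icc (0 : ℝ) 1 ×ˢ Set.Icc (t - 1) (t + 1)) :=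
      isCompact_Icc.prod isCompact_Icc
    have hcont : Continuous fun p : ℝ × ℝ => F' p.2 p.1 := by
      simp only [hF'def]; fun_prop
    exact hcomp.exists_bound_of_continuousOn hcont.continuousOn
  -- differentiate under the integral sign
  have key :
      HasDerivAt (fun s => ∫ x in (0 : ℝ)..1, F s x) (∫ x in (0 : ℝ)..1, F' t x) t := by
    have := (intervalIntegral.hasDerivAt_integral_of_dominated_loc_of_deriv_le
      (F := F) (F' := F') (x₀ := t) (a := 0) (b := 1) (bound := fun _ => M)
      (s := ball t 1) (μ := MeasureTheory.volume) (ball_mem_nhds t one_pos)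
      (Filter.Eventually.of_forall fun s => (hFcont s).aestronglyMeasurable)
      ((hFcont t).intervalIntegrable 0 1)
      ((hF'cont t).aestronglyMeasurable)
      ?_ (intervalIntegrable_const) ?_).2
    · exact this
    · refine Filter.Eventually.of_forall fun x hx s hs => ?_
      refine hM (x, s) ⟨?_, ?_⟩
      · have : Set.uIoc (0 : ℝ) 1 = Set.Ioc 0 1 := Set.uIoc_of_le (by norm_num)
        rw [this] at hx
        exact ⟨le_of_lt hx.1, hx.2⟩
      · have := mem_ball_iff_norm.mp hs
        rw [Real.norm_eq_abs, abs_lt] at this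
        constructor <;> linarith [this.1, this.2]
    · exact Filter.Eventually.of_forall fun x _ s _ => hdiffF x s
  -- identify the function
  have hfun : (fun s : ℝ => ∫ x in (0 : ℝ)..1,
      x * deriv (w x) s * deriv (fun y => w y s) x) = fun s => ∫ x in (0 : ℝ)..1, F s x := by
    funext s
    simp only [hU_eq, hV_eq, hFdef]
  rw [hfun]
  -- identify the derivative value via integration by parts
  set g : ℝ → ℝ := fun x => (1 / 2) * (U (x, t) ^ 2 + V (x, t) ^ 2) with hgdef
  set g' : ℝ → ℝ := fun x => U (x, t) * Ux (x, t) + V (x, t) * Vx (x, t) with hg'def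
  have hgderiv : ∀ x : ℝ, HasDerivAt g (g' x) x := by
    intro x
    have hu : HasDerivAt (fun y => U (y, t)) (Ux (x, t)) x :=
      slice_x (hUd (x, t))
    have hv : HasDerivAt (fun y => V (y, t)) (Vx (x, t)) x :=
      slice_x (hVd (x, t))
    have := (((hu.pow 2).add (hv.pow 2)).const_mul (1 / 2 : ℝ))
    refine this.congr_deriv ?_
    simp [hg'def]
    ring
  have h1cont : Continuous fun x : ℝ => ((x, t) : ℝ × ℝ) := continuous_id.prodMk continuous_const
  have hg'cont : Continuous g' :=
    ((hUcont.comp h1cont).mul (hUxc.comp h1cont)).add ((hVcont.comp h1cont).mul (hVxc.comp h1cont))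
  have hgcont : Continuous g := by
    exact continuous_const.mul (((hUcont.comp h1cont).pow 2).add ((hVcont.comp h1cont).pow 2))
  have hparts : ∫ x in (0 : ℝ)..1, x * g' x =
      1 * g 1 - 0 * g 0 - ∫ x in (0 : ℝ)..1, 1 * g x := by
    exact intervalIntegral.integral_mul_deriv_eq_deriv_mul
      (u := fun x => x) (u' := fun _ => 1) (v := g) (v' := g')
      (fun x _ => hasDerivAt_id x) (fun x _ => hgderiv x)
      (intervalIntegrable_const) (hg'cont.intervalIntegrable 0 1)
  have hval : (∫ x in (0 : ℝ)..1, F' t x) =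
      (1 / 2) * ((deriv (w 1) t) ^ 2 + (deriv (fun y => w y t) 1) ^ 2) -
        (1 / 2) * ∫ x in (0 : ℝ)..1,
          ((deriv (w x) t) ^ 2 + (deriv (fun y => w y t) x) ^ 2) := by
    have hcongr : ∫ x in (0 : ℝ)..1, F' t x = ∫ x in (0 : ℝ)..1, x * g' x := by
      apply intervalIntegral.integral_congr
      intro x hx
      rw [Set.uIcc_of_le (by norm_num : (0:ℝ) ≤ 1)] at hx
      simp only [hF'def, hg'def]
      rw [hUtVx x hx, hVtUx (x, t)]
      ring
    have hint2 : (∫ x in (0 : ℝ)..1,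
        ((deriv (w x) t) ^ 2 + (deriv (fun y => w y t) x) ^ 2)) =
        ∫ x in (0 : ℝ)..1, (U (x, t) ^ 2 + V (x, t) ^ 2) := by
      apply intervalIntegral.integral_congr
      intro x _
      simp only [hU_eq, hV_eq]
    rw [hcongr, hparts, hint2]
    simp only [hU_eq, hV_eq, hgdef]
    have : (∫ x in (0 : ℝ)..1, 1 * g x) =
        (1 / 2) * ∫ x in (0 : ℝ)..1, (U (x, t) ^ 2 + V (x, t) ^ 2) := by
      rw [← intervalIntegral.integral_const_mul]
      apply intervalIntegral.integral_congr
      intro x _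
      simp [hgdef]
    rw [this]
    ring
  rw [← hval]
  exact key
end

section
/- Let α > 0, k > 0, and let w : ℝ × ℝ → ℝ be twice continuously differentiable, satisfying the wave equation ∂²w/∂t²(x,t) = ∂²w/∂x²(x,t) for all x ∈ [0,1] and t ≥ 0, together with the boundary conditions ∂w/∂x(0,t) = k·∂w/∂t(0,t) and ∂w/∂x(1,t) = −α·w(1,t) for all t ≥ 0. Define E(t) = ∫₀¹ ( (∂w/∂x(x,t))² + (∂w/∂t(x,t))² ) dx + α·w(1,t)². Then E is differentiable at every t ≥ 0 with E'(t) = −2k·(∂w/∂t(0,t))². -/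
open MeasureTheory Set Metric

/-- Let `α, k > 0` and let `w` (written curried, `w x t`) be twice
continuously differentiable on `ℝ × ℝ`, satisfying `∂²w/∂t² = ∂²w/∂x²` for `x ∈ [0,1]`,
`t ≥ 0`, with boundary conditions `∂w/∂x(0,t) = k·∂w/∂t(0,t)` and
`∂w/∂x(1,t) = −α·w(1,t)` for `t ≥ 0`. With
`E(t) = ∫₀¹ ((∂w/∂x(x,t))² + (∂w/∂t(x,t))²) dx + α·w(1,t)²`, `E` is differentiable at
every `t ≥ 0` with `E'(t) = −2k·(∂w/∂t(0,t))²`. -/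
theorem stmt_15 (α k : ℝ) (hα : 0 < α) (hk : 0 < k)
    (w : ℝ → ℝ → ℝ) (hw : ContDiff ℝ 2 (Function.uncurry w))
    (hwave : ∀ x ∈ Set.Icc (0 : ℝ) 1, ∀ t : ℝ, 0 ≤ t →
      deriv (deriv (w x)) t = deriv (fun y => deriv (fun y' => w y' t) y) x)
    (hbc0 : ∀ t : ℝ, 0 ≤ t → deriv (fun y => w y t) 0 = k * deriv (w 0) t)
    (hbc1 : ∀ t : ℝ, 0 ≤ t → deriv (fun y => w y t) 1 = -α * w 1 t) :
    ∀ t : ℝ, 0 ≤ t →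
      HasDerivAt
        (fun s : ℝ =>
          (∫ x in (0 : ℝ)..1,
            ((deriv (fun y => w y s) x) ^ 2 + (deriv (w x) s) ^ 2)) + α * (w 1 s) ^ 2)
        (-2 * k * (deriv (w 0) t) ^ 2) t := by
  intro t ht
  set f : ℝ × ℝ → ℝ := Function.uncurry w with hfdef
  have hfd : Differentiable ℝ f := hw.differentiable (by norm_num)
  have hf1 : ContDiff ℝ 1 (fderiv ℝ f) := hw.fderiv_right (by norm_num)
  have hf1d : Differentiable ℝ (fderiv ℝ f) := hf1.differentiable one_ne_zero
  have hf2c : Continuous (fderiv ℝ (fderiv ℝ f)) := hf1.continuous_fderiv one_ne_zero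
  set u : ℝ × ℝ → ℝ := fun p => fderiv ℝ f p (1, 0) with hudef
  set v : ℝ × ℝ → ℝ := fun p => fderiv ℝ f p (0, 1) with hvdef
  set D : ℝ × ℝ → ℝ × ℝ → ℝ × ℝ → ℝ := fun p a b => fderiv ℝ (fderiv ℝ f) p a b with hDdef
  have hucont : Continuous u :=
    ((ContinuousLinearMap.apply ℝ ℝ ((1 : ℝ), (0 : ℝ))).continuous).comp hf1.continuous
  have hvcont : Continuous v :=
    ((ContinuousLinearMap.apply ℝ ℝ ((0 : ℝ), (1 : ℝ))).continuous).comp hf1.continuous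
  have hDcont : ∀ a b : ℝ × ℝ, Continuous (fun p => D p a b) := fun a b =>
    (hf2c.clm_apply continuous_const).clm_apply continuous_const
  -- partial derivatives of w
  have hcx : ∀ (x s : ℝ), HasDerivAt (fun y : ℝ => (y, s)) ((1 : ℝ), (0 : ℝ)) x := fun x s =>
    (hasDerivAt_id x).prodMk (hasDerivAt_const x s)
  have hct : ∀ (x s : ℝ), HasDerivAt (fun r : ℝ => (x, r)) ((0 : ℝ), (1 : ℝ)) s := fun x s =>
    (hasDerivAt_const s x).prodMk (hasDerivAt_id s)
  have hx : ∀ x s : ℝ, HasDerivAt (fun y => w y s) (u (x, s)) x := fun x s =>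
    ((hfd (x, s)).hasFDerivAt.comp_hasDerivAt x (hcx x s) :)
  have ht' : ∀ x s : ℝ, HasDerivAt (w x) (v (x, s)) s := fun x s =>
    (hfd (x, s)).hasFDerivAt.comp_hasDerivAt s (hct x s)
  -- derivatives of u and v
  have huF : ∀ p : ℝ × ℝ, HasFDerivAt u
      ((ContinuousLinearMap.apply ℝ ℝ ((1 : ℝ), (0 : ℝ))).comp (fderiv ℝ (fderiv ℝ f) p)) p :=
    fun p => (ContinuousLinearMap.apply ℝ ℝ ((1 : ℝ), (0 : ℝ))).hasFDerivAt.comp p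
      (hf1d p).hasFDerivAt
  have hvF : ∀ p : ℝ × ℝ, HasFDerivAt v
      ((ContinuousLinearMap.apply ℝ ℝ ((0 : ℝ), (1 : ℝ))).comp (fderiv ℝ (fderiv ℝ f) p)) p :=
    fun p => (ContinuousLinearMap.apply ℝ ℝ ((0 : ℝ), (1 : ℝ))).hasFDerivAt.comp p
      (hf1d p).hasFDerivAt
  have hux : ∀ x s : ℝ, HasDerivAt (fun y => u (y, s)) (D (x, s) (1, 0) (1, 0)) x := fun x s =>
    ((huF (x, s)).comp_hasDerivAt x (hcx x s) :)
  have hut : ∀ x s : ℝ, HasDerivAt (fun r => u (x, r)) (D (x, s) (0, 1) (1, 0)) s := fun x s =>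
    (huF (x, s)).comp_hasDerivAt s (hct x s)
  have hvx : ∀ x s : ℝ, HasDerivAt (fun y => v (y, s)) (D (x, s) (1, 0) (0, 1)) x := fun x s =>
    ((hvF (x, s)).comp_hasDerivAt x (hcx x s) :)
  have hvt : ∀ x s : ℝ, HasDerivAt (fun r => v (x, r)) (D (x, s) (0, 1) (0, 1)) s := fun x s =>
    (hvF (x, s)).comp_hasDerivAt s (hct x s)
  -- symmetry of second derivative
  have hsymm : ∀ p : ℝ × ℝ, D p (0, 1) (1, 0) = D p (1, 0) (0, 1) := fun p =>
    (hw.contDiffAt.isSymmSndFDerivAt (by norm_num)) _ _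
  -- wave equation in terms of D
  have hwave' : ∀ x ∈ Set.Icc (0 : ℝ) 1, D (x, t) (0, 1) (0, 1) = D (x, t) (1, 0) (1, 0) := by
    intro x hxmem
    have h1 : deriv (w x) = fun s => v (x, s) := funext fun s => (ht' x s).deriv
    have h2 : (fun y => deriv (fun y' => w y' t) y) = fun y => u (y, t) :=
      funext fun y => (hx y t).deriv
    have := hwave x hxmem t ht
    rw [h1, h2, (hvt x t).deriv, (hux x t).deriv] at this
    exact this
  -- boundary conditions in terms of u, v
  have hbc0' : u (0, t) = k * v (0, t) := by
    have := hbc0 t ht; rwa [(hx 0 t).deriv, (ht' 0 t).deriv] at this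
  have hbc1' : u (1, t) = -α * w 1 t := by
    have := hbc1 t ht; rwa [(hx 1 t).deriv] at this
  -- rewrite the goal function
  have hEeq : (fun s : ℝ =>
        (∫ x in (0 : ℝ)..1,
          ((deriv (fun y => w y s) x) ^ 2 + (deriv (w x) s) ^ 2)) + α * (w 1 s) ^ 2)
      = fun s : ℝ => (∫ x in (0 : ℝ)..1, (u (x, s) ^ 2 + v (x, s) ^ 2)) + α * (w 1 s) ^ 2 := by
    funext s
    congr 1
    have : (fun x => (deriv (fun y => w y s) x) ^ 2 + (deriv (w x) s) ^ 2)
        = fun x => u (x, s) ^ 2 + v (x, s) ^ 2 :=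
      funext fun x => by rw [(hx x s).deriv, (ht' x s).deriv]
    rw [this]
  rw [hEeq, (ht' 0 t).deriv]
  -- the t-derivative of the integrand
  set F' : ℝ → ℝ → ℝ := fun s x =>
    2 * u (x, s) * D (x, s) (0, 1) (1, 0) + 2 * v (x, s) * D (x, s) (0, 1) (0, 1) with hF'def
  have hF'cont : Continuous (fun p : ℝ × ℝ => F' p.2 p.1) := by
    apply Continuous.add
    · exact (continuous_const.mul hucont).mul (hDcont (0, 1) (1, 0))
    · exact (continuous_const.mul hvcont).mul (hDcont (0, 1) (0, 1))
  -- differentiation under the integral sign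
  have key : HasDerivAt (fun s : ℝ => ∫ x in (0 : ℝ)..1, (u (x, s) ^ 2 + v (x, s) ^ 2))
      (∫ x in (0 : ℝ)..1, F' t x) t := by
    -- bound on a compact set
    obtain ⟨C, hC⟩ : ∃ C, ∀ p ∈ (Set.uIcc (0 : ℝ) 1) ×ˢ Metric.closedBall t 1,
        ‖(fun p : ℝ × ℝ => F' p.2 p.1) p‖ ≤ C := by
      rcases (isCompact_uIcc.prod (isCompact_closedBall t 1)).exists_bound_of_continuousOn
        hF'cont.continuousOn with ⟨C, hC⟩
      exact ⟨C, hC⟩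
    refine (intervalIntegral.hasDerivAt_integral_of_dominated_loc_of_deriv_le
      (F := fun s x => u (x, s) ^ 2 + v (x, s) ^ 2) (F' := F')
      (bound := fun _ => C) (s := Metric.ball t 1) (Metric.ball_mem_nhds t one_pos) ?_ ?_ ?_ ?_ ?_ ?_).2
    · exact Filter.Eventually.of_forall fun s =>
        (((hucont.comp (Continuous.prodMk_left s)).pow 2).add
          ((hvcont.comp (Continuous.prodMk_left s)).pow 2)).aestronglyMeasurable
    · exact (((hucont.comp (Continuous.prodMk_left t)).pow 2).add
        ((hvcont.comp (Continuous.prodMk_left t)).pow 2)).intervalIntegrable 0 1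
    · exact (hF'cont.comp (Continuous.prodMk_left t)).aestronglyMeasurable
    · refine Filter.Eventually.of_forall fun x hxmem s hs => ?_
      exact hC (x, s) ⟨Set.uIoc_subset_uIcc hxmem, Metric.ball_subset_closedBall hs⟩
    · exact intervalIntegrable_const
    · refine Filter.Eventually.of_forall fun x _ s _ => ?_
      have : HasDerivAt (fun r => u (x, r) ^ 2 + v (x, r) ^ 2)
          (2 * u (x, s) * D (x, s) (0, 1) (1, 0) + 2 * v (x, s) * D (x, s) (0, 1) (0, 1)) s := by
        have hu2 : HasDerivAt (fun r => u (x, r) ^ 2)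
            (2 * u (x, s) * D (x, s) (0, 1) (1, 0)) s := by
          have := (hut x s).fun_pow 2
          simpa [mul_comm, mul_assoc, mul_left_comm] using this
        have hv2 : HasDerivAt (fun r => v (x, r) ^ 2)
            (2 * v (x, s) * D (x, s) (0, 1) (0, 1)) s := by
          have := (hvt x s).fun_pow 2
          simpa [mul_comm, mul_assoc, mul_left_comm] using this
        exact hu2.add hv2
      exact this
  -- evaluate the integral via FTC
  have hFTC : (∫ x in (0 : ℝ)..1, F' t x)
      = 2 * u (1, t) * v (1, t) - 2 * u (0, t) * v (0, t) := by
    have h01 : Set.uIcc (0 : ℝ) 1 = Set.Icc (0 : ℝ) 1 := Set.uIcc_of_le zero_le_one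
    have hder : ∀ x ∈ Set.uIcc (0 : ℝ) 1,
        HasDerivAt (fun y => 2 * u (y, t) * v (y, t)) (F' t x) x := by
      intro x hxmem
      rw [h01] at hxmem
      have h := ((hux x t).const_mul 2).mul (hvx x t)
      have heq : 2 * D (x, t) (1, 0) (1, 0) * v (x, t) + 2 * u (x, t) * D (x, t) (1, 0) (0, 1)
          = F' t x := by
        rw [hF'def]
        simp only
        rw [hsymm (x, t), hwave' x hxmem]
        ring
      rw [← heq]
      exact h
    have hint : IntervalIntegrable (F' t) volume 0 1 :=
      (hF'cont.comp (Continuous.prodMk_left t)).intervalIntegrable 0 1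
    have := intervalIntegral.integral_eq_sub_of_hasDerivAt hder hint
    simpa using this
  -- derivative of the boundary term
  have hbdry : HasDerivAt (fun s : ℝ => α * (w 1 s) ^ 2) (α * (2 * w 1 t * v (1, t))) t := by
    have := ((ht' 1 t).pow 2).const_mul α
    refine this.congr_deriv ?_
    ring
  have := (key.add hbdry)
  refine this.congr_deriv ?_
  rw [hFTC, hbc0', hbc1']
  ring
end

section
/- Let k > 0 and let p : ℝ × ℝ → ℝ be twice continuously differentiable, satisfying the wave equation ∂²p/∂t²(x,t) = ∂²p/∂x²(x,t) for all x ∈ [0,1] and t ≥ 0, together with the boundary conditions ∂p/∂x(0,t) = k·∂p/∂t(0,t) and p(1,t) = 0 for all t ≥ 0. Define E₂(t) = ∫₀¹ ( (∂p/∂x(x,t))² + (∂p/∂t(x,t))² ) dx. Then E₂ is differentiable at every t ≥ 0 with E₂'(t) = −2k·(∂p/∂t(0,t))². -/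
open Set Filter MeasureTheory Metric

private lemma aux_slice_t {g : ℝ × ℝ → ℝ} {g' : ℝ × ℝ →L[ℝ] ℝ} {x t : ℝ}
    (h : HasFDerivAt g g' (x, t)) : HasDerivAt (fun s => g (x, s)) (g' (0, 1)) t := by
  have h1 : HasDerivAt (fun s : ℝ => ((x, s) : ℝ × ℝ)) ((0 : ℝ), (1 : ℝ)) t :=
    (hasDerivAt_const t x).prodMk (hasDerivAt_id t)
  exact h.comp_hasDerivAt t h1

private lemma aux_slice_x {g : ℝ × ℝ → ℝ} {g' : ℝ × ℝ →L[ℝ] ℝ} {x t : ℝ}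
    (h : HasFDerivAt g g' (x, t)) : HasDerivAt (fun y => g (y, t)) (g' (1, 0)) x := by
  have h1 : HasDerivAt (fun y : ℝ => ((y, t) : ℝ × ℝ)) ((1 : ℝ), (0 : ℝ)) x :=
    (hasDerivAt_id x).prodMk (hasDerivAt_const x t)
  exact h.comp_hasDerivAt x h1

private lemma aux_f_t {f : ℝ × ℝ → ℝ} (hf : ContDiff ℝ 2 f) (x s : ℝ) :
    HasDerivAt (fun s' => f (x, s')) (fderiv ℝ f (x, s) (0, 1)) s :=
  aux_slice_t ((hf.differentiable (by norm_num) (x, s)).hasFDerivAt)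

private lemma aux_f_x {f : ℝ × ℝ → ℝ} (hf : ContDiff ℝ 2 f) (x s : ℝ) :
    HasDerivAt (fun y => f (y, s)) (fderiv ℝ f (x, s) (1, 0)) x :=
  aux_slice_x ((hf.differentiable (by norm_num) (x, s)).hasFDerivAt)

private lemma aux_P_hasFDerivAt {f : ℝ × ℝ → ℝ} (hf : ContDiff ℝ 2 f) (v : ℝ × ℝ) (q : ℝ × ℝ) :
    HasFDerivAt (fun q' => fderiv ℝ f q' v)
      ((ContinuousLinearMap.apply ℝ ℝ v).comp (fderiv ℝ (fderiv ℝ f) q)) q := by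
  have h1 : ContDiff ℝ 1 (fderiv ℝ f) := hf.fderiv_right (by norm_num)
  exact (ContinuousLinearMap.apply ℝ ℝ v).hasFDerivAt.comp q
    ((h1.differentiable one_ne_zero q).hasFDerivAt)

private lemma aux_P_t {f : ℝ × ℝ → ℝ} (hf : ContDiff ℝ 2 f) (v : ℝ × ℝ) (x s : ℝ) :
    HasDerivAt (fun s' => fderiv ℝ f (x, s') v)
      (fderiv ℝ (fderiv ℝ f) (x, s) (0, 1) v) s := by
  simpa using aux_slice_t (g := fun q' => fderiv ℝ f q' v) (aux_P_hasFDerivAt hf v (x, s))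

private lemma aux_P_x {f : ℝ × ℝ → ℝ} (hf : ContDiff ℝ 2 f) (v : ℝ × ℝ) (x s : ℝ) :
    HasDerivAt (fun y => fderiv ℝ f (y, s) v)
      (fderiv ℝ (fderiv ℝ f) (x, s) (1, 0) v) x := by
  simpa using aux_slice_x (g := fun q' => fderiv ℝ f q' v) (aux_P_hasFDerivAt hf v (x, s))

private lemma aux_P_cont {f : ℝ × ℝ → ℝ} (hf : ContDiff ℝ 2 f) (v : ℝ × ℝ) :
    Continuous (fun q => fderiv ℝ f q v) :=
  ((hf.fderiv_right (m := 1) (by norm_num)).continuous).clm_apply continuous_const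

private lemma aux_D_cont {f : ℝ × ℝ → ℝ} (hf : ContDiff ℝ 2 f) (v w : ℝ × ℝ) :
    Continuous (fun q => fderiv ℝ (fderiv ℝ f) q v w) := by
  have h1 : ContDiff ℝ 1 (fderiv ℝ f) := hf.fderiv_right (by norm_num)
  have h2 : Continuous (fderiv ℝ (fderiv ℝ f)) :=
    (h1.fderiv_right (m := 0) (by norm_num)).continuous
  exact (h2.clm_apply continuous_const).clm_apply continuous_const

private lemma aux_symm {f : ℝ × ℝ → ℝ} (hf : ContDiff ℝ 2 f) (q v w : ℝ × ℝ) :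
    fderiv ℝ (fderiv ℝ f) q v w = fderiv ℝ (fderiv ℝ f) q w v :=
  (hf.contDiffAt.isSymmSndFDerivAt (by simp)) v w

/-- Let `k > 0` and let `p` (written curried, `p x t`) be twice
continuously differentiable on `ℝ × ℝ`, satisfying `∂²p/∂t² = ∂²p/∂x²` for `x ∈ [0,1]`,
`t ≥ 0`, with boundary conditions `∂p/∂x(0,t) = k·∂p/∂t(0,t)` and `p(1,t) = 0` for
`t ≥ 0`. With `E₂(t) = ∫₀¹ ((∂p/∂x(x,t))² + (∂p/∂t(x,t))²) dx`, `E₂` is differentiable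
at every `t ≥ 0` with `E₂'(t) = −2k·(∂p/∂t(0,t))²`. -/
theorem stmt_16 (k : ℝ) (hk : 0 < k)
    (p : ℝ → ℝ → ℝ) (hp : ContDiff ℝ 2 (Function.uncurry p))
    (hwave : ∀ x ∈ Set.Icc (0 : ℝ) 1, ∀ t : ℝ, 0 ≤ t →
      deriv (deriv (p x)) t = deriv (fun y => deriv (fun y' => p y' t) y) x)
    (hbc0 : ∀ t : ℝ, 0 ≤ t → deriv (fun y => p y t) 0 = k * deriv (p 0) t)
    (hbc1 : ∀ t : ℝ, 0 ≤ t → p 1 t = 0) :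
    ∀ t : ℝ, 0 ≤ t →
      HasDerivAt
        (fun s : ℝ => ∫ x in (0 : ℝ)..1,
          ((deriv (fun y => p y s) x) ^ 2 + (deriv (p x) s) ^ 2))
        (-2 * k * (deriv (p 0) t) ^ 2) t := by
  intro t ht
  have hA : ∀ x s : ℝ, deriv (p x) s = fderiv ℝ (Function.uncurry p) (x, s) (0, 1) :=
    fun x s => (aux_f_t hp x s).deriv
  have hB : ∀ x s : ℝ, deriv (fun y => p y s) x = fderiv ℝ (Function.uncurry p) (x, s) (1, 0) :=
    fun x s => (aux_f_x hp x s).deriv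
  have hwave' : ∀ x ∈ Icc (0:ℝ) 1,
      fderiv ℝ (fderiv ℝ (Function.uncurry p)) (x, t) (0,1) (0,1)
        = fderiv ℝ (fderiv ℝ (Function.uncurry p)) (x, t) (1,0) (1,0) := by
    intro x hx
    have l1 : deriv (deriv (p x)) t
        = fderiv ℝ (fderiv ℝ (Function.uncurry p)) (x, t) (0,1) (0,1) := by
      have e : deriv (p x) = fun s => fderiv ℝ (Function.uncurry p) (x, s) (0, 1) :=
        funext fun s => hA x s
      rw [e]
      exact (aux_P_t hp (0,1) x t).deriv
    have l2 : deriv (fun y => deriv (fun y' => p y' t) y) x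
        = fderiv ℝ (fderiv ℝ (Function.uncurry p)) (x, t) (1,0) (1,0) := by
      have e : (fun y => deriv (fun y' => p y' t) y)
          = fun y => fderiv ℝ (Function.uncurry p) (y, t) (1, 0) :=
        funext fun y => hB y t
      rw [e]
      exact (aux_P_x hp (1,0) x t).deriv
    rw [← l1, ← l2]
    exact hwave x hx t ht
  have hPt1 : fderiv ℝ (Function.uncurry p) (1, t) (0,1) = 0 := by
    rw [← hA 1 t]
    have hc : Continuous (deriv (p 1)) := by
      have h2 : ContDiff ℝ 2 (fun s => Function.uncurry p (1, s)) :=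
        hp.comp (contDiff_const.prodMk contDiff_id)
      exact h2.continuous_deriv (by norm_num)
    have hz : ∀ s ∈ Ioi (0:ℝ), deriv (p 1) s = 0 := by
      intro s hs
      have he : p 1 =ᶠ[nhds s] (fun _ => (0:ℝ)) := by
        filter_upwards [Ioi_mem_nhds hs] with u hu
        exact hbc1 u (le_of_lt hu)
      rw [he.deriv_eq, deriv_const]
    rcases eq_or_lt_of_le ht with h0 | h0
    · subst h0
      have h1 : Tendsto (deriv (p 1)) (nhdsWithin 0 (Ioi 0)) (nhds (deriv (p 1) 0)) :=
        hc.continuousAt.continuousWithinAt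
      have h2 : Tendsto (deriv (p 1)) (nhdsWithin 0 (Ioi 0)) (nhds 0) := by
        apply Tendsto.congr' _ tendsto_const_nhds
        filter_upwards [self_mem_nhdsWithin] with u hu
        exact (hz u hu).symm
      exact tendsto_nhds_unique h1 h2
    · exact hz t h0
  have hbc0' : fderiv ℝ (Function.uncurry p) (0, t) (1,0)
      = k * fderiv ℝ (Function.uncurry p) (0, t) (0,1) := by
    rw [← hA 0 t, ← hB 0 t]; exact hbc0 t ht
  set G : ℝ × ℝ → ℝ := fun q =>
      2 * fderiv ℝ (Function.uncurry p) q (1,0)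
        * fderiv ℝ (fderiv ℝ (Function.uncurry p)) q (0,1) (1,0)
      + 2 * fderiv ℝ (Function.uncurry p) q (0,1)
        * fderiv ℝ (fderiv ℝ (Function.uncurry p)) q (0,1) (0,1)
    with hG
  have hGc : Continuous G := by
    rw [hG]
    exact ((continuous_const.mul (aux_P_cont hp (1,0))).mul (aux_D_cont hp (0,1) (1,0))).add
      ((continuous_const.mul (aux_P_cont hp (0,1))).mul (aux_D_cont hp (0,1) (0,1)))
  have hGc' : ∀ s : ℝ, Continuous fun x => G (x, s) :=
    fun s => hGc.comp (continuous_id.prodMk continuous_const)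
  have hFc : ∀ s : ℝ, Continuous fun x : ℝ =>
      (fderiv ℝ (Function.uncurry p) (x, s) (1,0))^2
        + (fderiv ℝ (Function.uncurry p) (x, s) (0,1))^2 := fun s =>
    (((aux_P_cont hp (1,0)).comp (continuous_id.prodMk continuous_const)).pow 2).add
      (((aux_P_cont hp (0,1)).comp (continuous_id.prodMk continuous_const)).pow 2)
  obtain ⟨C, hC⟩ := (isCompact_Icc.prod isCompact_Icc :
      IsCompact (Icc (0:ℝ) 1 ×ˢ Icc (t-1) (t+1))).exists_bound_of_continuousOn hGc.continuousOn
  have key := (intervalIntegral.hasDerivAt_integral_of_dominated_loc_of_deriv_le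
      (𝕜 := ℝ) (μ := volume) (a := 0) (b := 1)
      (F := fun s x => (fderiv ℝ (Function.uncurry p) (x, s) (1,0))^2
        + (fderiv ℝ (Function.uncurry p) (x, s) (0,1))^2)
      (F' := fun s x => G (x, s)) (x₀ := t) (bound := fun _ => C) (s := ball t 1)
      (ball_mem_nhds t one_pos)
      (Filter.Eventually.of_forall fun s => ((hFc s).aestronglyMeasurable))
      ((hFc t).intervalIntegrable 0 1)
      ((hGc' t).aestronglyMeasurable)
      (Filter.Eventually.of_forall fun x hx s hs => by
        refine hC (x, s) ⟨Ioc_subset_Icc_self ?_, ?_⟩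
        · rwa [uIoc_of_le zero_le_one] at hx
        · rw [Real.ball_eq_Ioo] at hs
          exact Ioo_subset_Icc_self hs)
      (intervalIntegrable_const)
      (Filter.Eventually.of_forall fun x hx s hs => by
        have h1 := ((aux_P_t hp (1,0) x s).pow 2).add ((aux_P_t hp (0,1) x s).pow 2)
        rw [hG]
        refine h1.congr_deriv ?_
        norm_num)).2
  have hFTC : (∫ x in (0:ℝ)..1, G (x, t))
      = (fun y => 2 * (fderiv ℝ (Function.uncurry p) (y, t) (1,0)
          * fderiv ℝ (Function.uncurry p) (y, t) (0,1))) 1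
        - (fun y => 2 * (fderiv ℝ (Function.uncurry p) (y, t) (1,0)
          * fderiv ℝ (Function.uncurry p) (y, t) (0,1))) 0 := by
    refine intervalIntegral.integral_eq_sub_of_hasDerivAt
      (f := fun y => 2 * (fderiv ℝ (Function.uncurry p) (y, t) (1,0)
          * fderiv ℝ (Function.uncurry p) (y, t) (0,1)))
      ?_ ((hGc' t).intervalIntegrable 0 1)
    intro x hx
    rw [uIcc_of_le zero_le_one] at hx
    have h1 := ((aux_P_x hp (1,0) x t).mul (aux_P_x hp (0,1) x t)).const_mul (2:ℝ)
    refine h1.congr_deriv ?_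
    rw [hG]
    simp only
    rw [aux_symm hp (x,t) (0,1) (1,0), hwave' x hx]
    ring
  have hval : (∫ x in (0:ℝ)..1, G (x, t)) = -2 * k * (deriv (p 0) t)^2 := by
    rw [hFTC]
    simp only
    rw [hPt1, hbc0', hA 0 t]
    ring
  have keyfun : (fun s : ℝ => ∫ x in (0:ℝ)..1,
        ((deriv (fun y => p y s) x) ^ 2 + (deriv (p x) s) ^ 2))
      = fun s : ℝ => ∫ x in (0:ℝ)..1,
        ((fderiv ℝ (Function.uncurry p) (x, s) (1,0))^2
          + (fderiv ℝ (Function.uncurry p) (x, s) (0,1))^2) := by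
    funext s
    refine intervalIntegral.integral_congr fun x _ => ?_
    rw [hA x s, hB x s]
  rw [keyfun, ← hval]
  exact key
end

section
/- Let M > 0, ω > 0, and let E : ℝ → ℝ be differentiable on [0,∞) with 0 ≤ E(t) ≤ M² e^{−2ωt} for all t ≥ 0, and suppose E'(t) = −h(t) for all t ≥ 0, where h : [0,∞) → ℝ is continuous and nonnegative. Then for every γ with 0 < γ < ω, the improper integral ∫₀^∞ e^{2γt} h(t) dt converges and satisfies ∫₀^∞ e^{2γt} h(t) dt ≤ E(0) + γ M² / (ω − γ). -/
open Filter

/-- Let `M, ω > 0` and let `E : ℝ → ℝ` be differentiable on `[0,∞)`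
with `0 ≤ E(t) ≤ M² e^(−2ωt)` and `E'(t) = −h(t)` for `t ≥ 0`, where `h` is continuous
and nonnegative on `[0,∞)`. Then for every `0 < γ < ω`, the improper integral
`∫₀^∞ e^(2γt) h(t) dt` (the limit of `∫₀^T` as `T → ∞`) converges, with
`∫₀^∞ e^(2γt) h(t) dt ≤ E(0) + γ M²/(ω − γ)`. -/
theorem stmt_17 (M ω : ℝ) (hM : 0 < M) (hω : 0 < ω) (E h : ℝ → ℝ)
    (hE : ∀ t : ℝ, 0 ≤ t → HasDerivWithinAt E (-h t) (Set.Ici (0 : ℝ)) t)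
    (hEnn : ∀ t : ℝ, 0 ≤ t → 0 ≤ E t)
    (hEbd : ∀ t : ℝ, 0 ≤ t → E t ≤ M ^ 2 * Real.exp (-2 * ω * t))
    (hhcont : ContinuousOn h (Set.Ici (0 : ℝ)))
    (hhnn : ∀ t : ℝ, 0 ≤ t → 0 ≤ h t) :
    ∀ γ : ℝ, 0 < γ → γ < ω →
      ∃ L : ℝ,
        Tendsto (fun T : ℝ => ∫ t in (0 : ℝ)..T, Real.exp (2 * γ * t) * h t) atTop (nhds L) ∧
        L ≤ E 0 + γ * M ^ 2 / (ω - γ) := by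
  intro γ hγ0 hγω
  have hEc : ContinuousOn E (Set.Ici 0) := fun t ht => (hE t ht).continuousWithinAt
  set c : ℝ := 2 * γ - 2 * ω with hcdef
  have hcneg : c < 0 := by simp only [hcdef]; linarith
  set C : ℝ := E 0 + γ * M ^ 2 / (ω - γ) with hCdef
  set g : ℝ → ℝ := fun t => Real.exp (2 * γ * t) * h t with hgdef
  set F : ℝ → ℝ := fun T => ∫ t in (0 : ℝ)..T, g t with hFdef
  have hgcont : ContinuousOn g (Set.Ici 0) :=
    (Continuous.continuousOn (by fun_prop)).mul hhcont
  have hsub : ∀ a b : ℝ, 0 ≤ a → 0 ≤ b → Set.uIcc a b ⊆ Set.Ici (0:ℝ) := by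
    intro a b ha hb x hx
    exact le_trans (le_min ha hb) hx.1
  have hgint : ∀ a b : ℝ, 0 ≤ a → 0 ≤ b →
      IntervalIntegrable g MeasureTheory.volume a b := by
    intro a b ha hb
    exact (hgcont.mono (hsub a b ha hb)).intervalIntegrable
  -- bound: for T ≥ 0, F T ≤ C
  have hbound : ∀ T : ℝ, 0 ≤ T → F T ≤ C := by
    intro T hT
    -- derivative of Ψ t = exp(2γt) * E t
    set Ψ : ℝ → ℝ := fun t => Real.exp (2 * γ * t) * E t with hΨdef
    have hΨd : ∀ t ∈ Set.Ioo 0 T, HasDerivWithinAt Ψ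
        (2 * γ * Real.exp (2 * γ * t) * E t - g t) (Set.Ioi t) t := by
      intro t ht
      have hmem : Set.Ici (0:ℝ) ∈ nhds t := Ici_mem_nhds ht.1
      have hEd : HasDerivAt E (-h t) t := (hE t ht.1.le).hasDerivAt hmem
      have hexp : HasDerivAt (fun t => Real.exp (2 * γ * t))
          (Real.exp (2 * γ * t) * (2 * γ)) t := by
        simpa using HasDerivAt.exp ((hasDerivAt_id t).const_mul (2 * γ))
      have := hexp.mul hEd
      have h2 : Real.exp (2 * γ * t) * (2 * γ) * E t + Real.exp (2 * γ * t) * (-h t)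
          = 2 * γ * Real.exp (2 * γ * t) * E t - g t := by
        simp only [hgdef]; ring
      rw [h2] at this
      exact this.hasDerivWithinAt
    have hΨc : ContinuousOn Ψ (Set.Icc 0 T) := by
      apply ContinuousOn.mul (Continuous.continuousOn (by fun_prop))
      exact hEc.mono (fun x hx => hx.1)
    have hEint : IntervalIntegrable (fun t => 2 * γ * Real.exp (2 * γ * t) * E t)
        MeasureTheory.volume 0 T := by
      apply ContinuousOn.intervalIntegrable
      apply ContinuousOn.mono _ (hsub 0 T le_rfl hT)
      exact (Continuous.continuousOn (by fun_prop)).mul hEc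
    have hΨ'int : IntervalIntegrable (fun t => 2 * γ * Real.exp (2 * γ * t) * E t - g t)
        MeasureTheory.volume 0 T := hEint.sub (hgint 0 T le_rfl hT)
    have hftc := intervalIntegral.integral_eq_sub_of_hasDeriv_right_of_le hT hΨc hΨd hΨ'int
    have hsplit : (∫ t in (0:ℝ)..T, (2 * γ * Real.exp (2 * γ * t) * E t - g t))
        = (∫ t in (0:ℝ)..T, 2 * γ * Real.exp (2 * γ * t) * E t) - F T :=
      intervalIntegral.integral_sub hEint (hgint 0 T le_rfl hT)
    have hΨ0 : Ψ 0 = E 0 := by simp [hΨdef]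
    have hΨTnn : 0 ≤ Ψ T := mul_nonneg (Real.exp_pos _).le (hEnn T hT)
    -- compare with exponential integral
    have hcexpint : IntervalIntegrable (fun t => 2 * γ * M ^ 2 * Real.exp (c * t))
        MeasureTheory.volume 0 T := (Continuous.intervalIntegrable (by fun_prop)) 0 T
    have hmono : (∫ t in (0:ℝ)..T, 2 * γ * Real.exp (2 * γ * t) * E t)
        ≤ ∫ t in (0:ℝ)..T, 2 * γ * M ^ 2 * Real.exp (c * t) := by
      apply intervalIntegral.integral_mono_on hT hEint hcexpint
      intro t ht
      have h1 : E t ≤ M ^ 2 * Real.exp (-2 * ω * t) := hEbd t ht.1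
      have h2 : Real.exp (2 * γ * t) * (M ^ 2 * Real.exp (-2 * ω * t))
          = M ^ 2 * Real.exp (c * t) := by
        rw [mul_comm, mul_assoc, ← Real.exp_add]
        congr 2
        rw [hcdef]; ring
      calc 2 * γ * Real.exp (2 * γ * t) * E t
          ≤ 2 * γ * (Real.exp (2 * γ * t) * (M ^ 2 * Real.exp (-2 * ω * t))) := by
            rw [mul_assoc]
            apply mul_le_mul_of_nonneg_left _ (by linarith)
            exact mul_le_mul_of_nonneg_left h1 (Real.exp_pos _).le
        _ = 2 * γ * M ^ 2 * Real.exp (c * t) := by rw [h2]; ring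
    -- compute exponential integral
    have hφ : ∀ t ∈ Set.uIcc (0:ℝ) T, HasDerivAt (fun t => Real.exp (c * t) / c)
        (Real.exp (c * t)) t := by
      intro t _
      have h4 := (HasDerivAt.exp ((hasDerivAt_id t).const_mul c)).div_const c
      have hc0 : c ≠ 0 := ne_of_lt hcneg
      have h3 : Real.exp (c * t) * c / c = Real.exp (c * t) := by
        field_simp
      simpa [h3] using h4
    have hexpval : (∫ t in (0:ℝ)..T, Real.exp (c * t))
        = Real.exp (c * T) / c - 1 / c := by
      rw [intervalIntegral.integral_eq_sub_of_hasDerivAt hφ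
        ((Continuous.intervalIntegrable (by fun_prop)) 0 T)]
      norm_num
    have hexpbd : (∫ t in (0:ℝ)..T, Real.exp (c * t)) ≤ -1 / c := by
      rw [hexpval]
      have h5 : Real.exp (c * T) / c ≤ 0 :=
        div_nonpos_of_nonneg_of_nonpos (Real.exp_pos _).le hcneg.le
      have h6 : -1 / c = -(1 / c) := by ring
      linarith
    have hfinal : (∫ t in (0:ℝ)..T, 2 * γ * M ^ 2 * Real.exp (c * t))
        ≤ γ * M ^ 2 / (ω - γ) := by
      rw [intervalIntegral.integral_const_mul]
      have hnn : (0:ℝ) ≤ 2 * γ * M ^ 2 := by positivity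
      calc 2 * γ * M ^ 2 * ∫ t in (0:ℝ)..T, Real.exp (c * t)
          ≤ 2 * γ * M ^ 2 * (-1 / c) := mul_le_mul_of_nonneg_left hexpbd hnn
        _ = γ * M ^ 2 / (ω - γ) := by
            have hne1 : ω - γ ≠ 0 := ne_of_gt (by linarith)
            have hne2 : 2 * γ - 2 * ω ≠ 0 := ne_of_lt (by linarith)
            have hne3 : γ - ω ≠ 0 := ne_of_lt (by linarith)
            rw [hcdef]
            field_simp
            ring
    -- put it together
    have : F T = (∫ t in (0:ℝ)..T, 2 * γ * Real.exp (2 * γ * t) * E t) - (Ψ T - Ψ 0) := by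
      rw [← hftc, hsplit]; ring
    rw [this, hΨ0]
    have := le_trans hmono hfinal
    simp only [hCdef]
    linarith
  -- monotonicity
  have hFmono : ∀ a b : ℝ, 0 ≤ a → a ≤ b → F a ≤ F b := by
    intro a b ha hab
    have hb : 0 ≤ b := le_trans ha hab
    have hadd := intervalIntegral.integral_add_adjacent_intervals
      (hgint 0 a le_rfl ha) (hgint a b ha hb)
    have hnn : 0 ≤ ∫ t in a..b, g t := by
      apply intervalIntegral.integral_nonneg hab
      intro u hu
      exact mul_nonneg (Real.exp_pos _).le (hhnn u (le_trans ha hu.1))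
    simp only [hFdef]
    rw [← hadd]
    linarith
  -- limit via G = F ∘ max · 0
  set G : ℝ → ℝ := fun T => F (max T 0) with hGdef
  have hGmono : Monotone G := by
    intro a b hab
    exact hFmono _ _ (le_max_right a 0) (max_le_max hab le_rfl)
  have hGbdd : BddAbove (Set.range G) := by
    refine ⟨C, ?_⟩
    rintro x ⟨T, rfl⟩
    exact hbound _ (le_max_right T 0)
  have hGtend : Tendsto G atTop (nhds (⨆ T, G T)) := tendsto_atTop_ciSup hGmono hGbdd
  refine ⟨⨆ T, G T, ?_, ?_⟩
  · apply hGtend.congr'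
    filter_upwards [eventually_ge_atTop (0:ℝ)] with T hT
    simp [hGdef, max_eq_left hT]
  · exact ciSup_le fun T => hbound _ (le_max_right T 0)
end

section
/- Let M₀ > 0, γ₀ > 0, and let ρ : ℝ → ℝ be differentiable on [0,∞) with |ρ(t)| ≤ M₀² e^{−2γ₀ t} for all t ≥ 0. Suppose ρ'(t) = b(t) − c(t) for all t ≥ 0, where b, c : [0,∞) → ℝ are continuous, b(t) ≥ 0, and 0 ≤ c(t) ≤ M₀² e^{−2γ₀ t} for all t ≥ 0. Then for every γ with 0 < γ < 2γ₀, the improper integral ∫₀^∞ e^{γ t} b(t) dt converges and satisfies ∫₀^∞ e^{γ t} b(t) dt ≤ 2M₀² + (1 + γ) M₀² / (2γ₀ − γ). -/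
open Filter

/-- Let `M₀, γ₀ > 0` and let `ρ : ℝ → ℝ` be differentiable on `[0,∞)`
with `|ρ(t)| ≤ M₀² e^(−2γ₀ t)` and `ρ'(t) = b(t) − c(t)` for `t ≥ 0`, where `b, c` are
continuous on `[0,∞)`, `b(t) ≥ 0`, and `0 ≤ c(t) ≤ M₀² e^(−2γ₀ t)` for `t ≥ 0`. Then for
every `0 < γ < 2γ₀`, the improper integral `∫₀^∞ e^(γt) b(t) dt` (the limit of `∫₀^T`
as `T → ∞`) converges, with `∫₀^∞ e^(γt) b(t) dt ≤ 2M₀² + (1 + γ)M₀²/(2γ₀ − γ)`. -/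
theorem stmt_18 (M₀ γ₀ : ℝ) (hM₀ : 0 < M₀) (hγ₀ : 0 < γ₀) (ρ b c : ℝ → ℝ)
    (hρ : ∀ t : ℝ, 0 ≤ t → HasDerivWithinAt ρ (b t - c t) (Set.Ici (0 : ℝ)) t)
    (hρbd : ∀ t : ℝ, 0 ≤ t → |ρ t| ≤ M₀ ^ 2 * Real.exp (-2 * γ₀ * t))
    (hbcont : ContinuousOn b (Set.Ici (0 : ℝ)))
    (hccont : ContinuousOn c (Set.Ici (0 : ℝ)))
    (hbnn : ∀ t : ℝ, 0 ≤ t → 0 ≤ b t)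
    (hcnn : ∀ t : ℝ, 0 ≤ t → 0 ≤ c t)
    (hcbd : ∀ t : ℝ, 0 ≤ t → c t ≤ M₀ ^ 2 * Real.exp (-2 * γ₀ * t)) :
    ∀ γ : ℝ, 0 < γ → γ < 2 * γ₀ →
      ∃ L : ℝ,
        Tendsto (fun T : ℝ => ∫ t in (0 : ℝ)..T, Real.exp (γ * t) * b t) atTop (nhds L) ∧
        L ≤ 2 * M₀ ^ 2 + (1 + γ) * M₀ ^ 2 / (2 * γ₀ - γ) := by
  intro γ hγ hγ2
  set a : ℝ := γ - 2 * γ₀ with ha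
  have haneg : a < 0 := by rw [ha]; linarith
  have hane : a ≠ 0 := ne_of_lt haneg
  have hρcont : ContinuousOn ρ (Set.Ici 0) := fun t ht => (hρ t ht).continuousWithinAt
  set K : ℝ := 2 * M₀ ^ 2 + (1 + γ) * M₀ ^ 2 / (2 * γ₀ - γ) with hK
  have hInt : ∀ (f : ℝ → ℝ), ContinuousOn f (Set.Ici 0) → ∀ S T : ℝ, 0 ≤ S → S ≤ T →
      IntervalIntegrable f MeasureTheory.volume S T := by
    intro f hf S T hS hST
    apply (hf.mono _).intervalIntegrable
    rw [Set.uIcc_of_le hST]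
    exact fun x hx => le_trans hS hx.1
  have hexpcont : Continuous (fun t : ℝ => Real.exp (γ * t)) :=
    Real.continuous_exp.comp (continuous_const.mul continuous_id)
  -- key algebraic identity
  have key : ∀ t : ℝ, Real.exp (γ*t) * (M₀^2 * Real.exp (-2*γ₀*t)) = M₀^2 * Real.exp (a*t) := by
    intro t
    rw [mul_left_comm, ← Real.exp_add]
    have : γ*t + -2*γ₀*t = a*t := by rw [ha]; ring
    rw [this]
  have hFexp : ∀ t : ℝ, HasDerivAt (fun s => Real.exp (a*s)/a) (Real.exp (a*t)) t := by
    intro t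
    have h0 : HasDerivAt (fun s : ℝ => a * s) a t := by
      simpa using (hasDerivAt_id t).const_mul a
    have h1 : HasDerivAt (fun s => Real.exp (a*s)) (Real.exp (a*t)*a) t :=
      (Real.hasDerivAt_exp (a*t)).comp t h0
    have := h1.div_const a
    rwa [mul_div_assoc, div_self hane, mul_one] at this
  have hexpval : ∀ T : ℝ, ∫ t in (0:ℝ)..T, Real.exp (a*t) = Real.exp (a*T)/a - 1/a := by
    intro T
    have := intervalIntegral.integral_eq_sub_of_hasDerivAt (a := 0) (b := T)
      (f := fun s => Real.exp (a*s)/a)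
      (f' := fun t => Real.exp (a*t)) (fun t _ => hFexp t)
      ((Real.continuous_exp.comp (continuous_const.mul continuous_id)).continuousOn.intervalIntegrable)
    rw [this]; simp
  have hexpbd : ∀ T : ℝ, 0 ≤ T → ∫ t in (0:ℝ)..T, Real.exp (a*t) ≤ 1/(2*γ₀-γ) := by
    intro T hT
    rw [hexpval]
    have hpos : (0:ℝ) < -a := by linarith
    have h2 : (2*γ₀-γ) = -a := by rw [ha]; ring
    have h3 : Real.exp (a*T)/a - 1/a = (1 - Real.exp (a*T)) / (-a) := by
      field_simp
      ring
    rw [h2, h3, div_le_div_iff₀ hpos hpos]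
    nlinarith [Real.exp_pos (a*T)]
  have hcpt : ∀ t : ℝ, 0 ≤ t → Real.exp (γ*t) * c t ≤ M₀^2 * Real.exp (a*t) := by
    intro t ht
    calc Real.exp (γ*t) * c t ≤ Real.exp (γ*t) * (M₀^2 * Real.exp (-2*γ₀*t)) :=
          mul_le_mul_of_nonneg_left (hcbd t ht) (Real.exp_pos _).le
      _ = M₀^2 * Real.exp (a*t) := key t
  have hρpt : ∀ t : ℝ, 0 ≤ t → -(Real.exp (γ*t) * ρ t) ≤ M₀^2 * Real.exp (a*t) := by
    intro t ht
    have h1 : -(ρ t) ≤ |ρ t| := neg_le_abs _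
    calc -(Real.exp (γ*t) * ρ t) = Real.exp (γ*t) * (-(ρ t)) := by ring
      _ ≤ Real.exp (γ*t) * (M₀^2 * Real.exp (-2*γ₀*t)) :=
          mul_le_mul_of_nonneg_left (h1.trans (hρbd t ht)) (Real.exp_pos _).le
      _ = M₀^2 * Real.exp (a*t) := key t
  set g : ℝ → ℝ := fun t => Real.exp (γ*t) * ρ t with hg
  have hgderiv : ∀ t : ℝ, 0 ≤ t → HasDerivWithinAt g
      (γ * (Real.exp (γ*t) * ρ t) + Real.exp (γ*t) * (b t - c t)) (Set.Ici 0) t := by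
    intro t ht
    have h0 : HasDerivAt (fun s : ℝ => γ * s) γ t := by
      simpa using (hasDerivAt_id t).const_mul γ
    have h1 : HasDerivAt (fun s => Real.exp (γ*s)) (Real.exp (γ*t)*γ) t :=
      (Real.hasDerivAt_exp (γ*t)).comp t h0
    have := h1.hasDerivWithinAt.mul (hρ t ht)
    exact this.congr_deriv (by ring)
  have hgcont : ContinuousOn g (Set.Ici 0) := hexpcont.continuousOn.mul hρcont
  have hftc : ∀ T : ℝ, 0 ≤ T →
      ∫ t in (0:ℝ)..T, (γ * (Real.exp (γ*t) * ρ t) + Real.exp (γ*t) * (b t - c t))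
        = g T - g 0 := by
    intro T hT
    apply intervalIntegral.integral_eq_sub_of_hasDeriv_right_of_le hT
    · exact hgcont.mono (fun x hx => hx.1)
    · intro x hx
      exact (hgderiv x hx.1.le).mono (fun y hy => hx.1.le.trans hy.le)
    · apply hInt _ _ _ _ le_rfl hT
      exact (continuousOn_const.mul (hexpcont.continuousOn.mul hρcont)).add
        (hexpcont.continuousOn.mul (hbcont.sub hccont))
  have hbint : ∀ S T : ℝ, 0 ≤ S → S ≤ T → IntervalIntegrable (fun t => Real.exp (γ*t) * b t)
      MeasureTheory.volume S T := fun S T hS hST =>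
    hInt _ (hexpcont.continuousOn.mul hbcont) S T hS hST
  have hcint : ∀ T : ℝ, 0 ≤ T → IntervalIntegrable (fun t => Real.exp (γ*t) * c t)
      MeasureTheory.volume 0 T := fun T hT =>
    hInt _ (hexpcont.continuousOn.mul hccont) 0 T le_rfl hT
  have hρint : ∀ T : ℝ, 0 ≤ T → IntervalIntegrable (fun t => Real.exp (γ*t) * ρ t)
      MeasureTheory.volume 0 T := fun T hT =>
    hInt _ (hexpcont.continuousOn.mul hρcont) 0 T le_rfl hT
  have hexpintgr : ∀ T : ℝ, IntervalIntegrable (fun t => M₀^2 * Real.exp (a*t))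
      MeasureTheory.volume 0 T := fun T =>
    (continuous_const.mul (Real.continuous_exp.comp
      (continuous_const.mul continuous_id))).intervalIntegrable 0 T
  have hbound : ∀ T : ℝ, 0 ≤ T → ∫ t in (0:ℝ)..T, Real.exp (γ*t) * b t ≤ K := by
    intro T hT
    have hsub : ∫ t in (0:ℝ)..T, Real.exp (γ*t) * (b t - c t)
        = (∫ t in (0:ℝ)..T, Real.exp (γ*t) * b t) - ∫ t in (0:ℝ)..T, Real.exp (γ*t) * c t := by
      rw [← intervalIntegral.integral_sub (hbint 0 T le_rfl hT) (hcint T hT)]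
      apply intervalIntegral.integral_congr
      intro t _
      ring
    have hsplit : ∫ t in (0:ℝ)..T, Real.exp (γ*t) * b t
        = (∫ t in (0:ℝ)..T, Real.exp (γ*t) * c t)
          + (g T - g 0)
          - γ * ∫ t in (0:ℝ)..T, Real.exp (γ*t) * ρ t := by
      have h1 := hftc T hT
      rw [intervalIntegral.integral_add ((hρint T hT).const_mul γ)
        (hInt (fun t => Real.exp (γ*t) * (b t - c t)) (hexpcont.continuousOn.mul (hbcont.sub hccont)) 0 T le_rfl hT),
        intervalIntegral.integral_const_mul, hsub] at h1
      linarith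
    rw [hsplit]
    have hMexp : ∫ t in (0:ℝ)..T, M₀^2 * Real.exp (a*t) ≤ M₀^2 / (2*γ₀-γ) := by
      rw [intervalIntegral.integral_const_mul]
      calc M₀^2 * ∫ t in (0:ℝ)..T, Real.exp (a*t) ≤ M₀^2 * (1/(2*γ₀-γ)) :=
            mul_le_mul_of_nonneg_left (hexpbd T hT) (by positivity)
        _ = M₀^2 / (2*γ₀-γ) := by ring
    have hA : ∫ t in (0:ℝ)..T, Real.exp (γ*t) * c t ≤ M₀^2 / (2*γ₀-γ) := by
      refine le_trans ?_ hMexp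
      exact intervalIntegral.integral_mono_on hT (hcint T hT) (hexpintgr T)
        (fun t ht => hcpt t ht.1)
    have hB : g T - g 0 ≤ 2 * M₀^2 := by
      have h1 : g T ≤ M₀^2 := by
        have h2 : g T ≤ M₀^2 * Real.exp (a*T) := by
          calc g T ≤ Real.exp (γ*T) * (M₀^2 * Real.exp (-2*γ₀*T)) :=
                mul_le_mul_of_nonneg_left ((le_abs_self _).trans (hρbd T hT)) (Real.exp_pos _).le
            _ = M₀^2 * Real.exp (a*T) := key T
        have h4 : Real.exp (a*T) ≤ 1 := by
          rw [Real.exp_le_one_iff]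
          exact mul_nonpos_of_nonpos_of_nonneg haneg.le hT
        nlinarith
      have h5 : -(g 0) ≤ M₀^2 := by
        have h6 := hρbd 0 le_rfl
        simp only [mul_zero, Real.exp_zero] at h6
        have h7 : g 0 = ρ 0 := by simp [hg]
        rw [h7]
        nlinarith [neg_le_abs (ρ 0)]
      linarith
    have hC : -(γ * ∫ t in (0:ℝ)..T, Real.exp (γ*t) * ρ t) ≤ γ * (M₀^2 / (2*γ₀-γ)) := by
      have h1 : -(∫ t in (0:ℝ)..T, Real.exp (γ*t) * ρ t) ≤ M₀^2 / (2*γ₀-γ) := by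
        rw [← intervalIntegral.integral_neg]
        refine le_trans ?_ hMexp
        exact intervalIntegral.integral_mono_on hT ((hρint T hT).neg) (hexpintgr T)
          (fun t ht => hρpt t ht.1)
      calc -(γ * ∫ t in (0:ℝ)..T, Real.exp (γ*t) * ρ t)
          = γ * (-(∫ t in (0:ℝ)..T, Real.exp (γ*t) * ρ t)) := by ring
        _ ≤ γ * (M₀^2 / (2*γ₀-γ)) := mul_le_mul_of_nonneg_left h1 hγ.le
    have hKeq : K = 2*M₀^2 + M₀^2/(2*γ₀-γ) + γ * (M₀^2/(2*γ₀-γ)) := by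
      rw [hK]
      have h2 : (2*γ₀-γ) ≠ 0 := (by linarith : (0:ℝ) < 2*γ₀-γ).ne'
      field_simp
      ring
    rw [hKeq]
    linarith
  set F : ℝ → ℝ := fun T => ∫ t in (0:ℝ)..T, Real.exp (γ*t) * b t with hF
  have hFmono : ∀ S T : ℝ, 0 ≤ S → S ≤ T → F S ≤ F T := by
    intro S T hS hST
    have hadd : F S + (∫ t in S..T, Real.exp (γ*t) * b t) = F T :=
      intervalIntegral.integral_add_adjacent_intervals (hbint 0 S le_rfl hS)
        (hbint S T hS hST)
    have hnn : 0 ≤ ∫ t in S..T, Real.exp (γ*t) * b t :=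
      intervalIntegral.integral_nonneg hST
        (fun t ht => mul_nonneg (Real.exp_pos _).le (hbnn t (hS.trans ht.1)))
    linarith
  set G : ℝ → ℝ := fun T => F (max T 0) with hG
  have hGmono : Monotone G := fun x y hxy =>
    hFmono _ _ (le_max_right x 0) (max_le_max hxy le_rfl)
  have hGbd : ∀ T, G T ≤ K := fun T => hbound _ (le_max_right T 0)
  have hGbdd : BddAbove (Set.range G) := ⟨K, by rintro x ⟨T, rfl⟩; exact hGbd T⟩
  refine ⟨⨆ T, G T, ?_, ?_⟩
  · have h1 : Tendsto G atTop (nhds (⨆ T, G T)) := tendsto_atTop_ciSup hGmono hGbdd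
    apply h1.congr'
    filter_upwards [eventually_ge_atTop (0:ℝ)] with T hT
    simp [hG, max_eq_left hT]
  · exact ciSup_le hGbd
end
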